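/- arXiv:2112.01792 — 5 statements merged into one kernel-verified Lean document; each statement's English description precedes it below -/
import Mathlib

section
/- With the partition, matrices, energy norm |||·||| and bilinear form A(·,·) as in the context, every function z : (0,T] → ℝ^{2d} whose restriction to each closed slab [t_{n−1}, t_n] extends to a continuously differentiable function satisfies the coercivity identity A(z, z) = |||z|||². -/
open Matrix MeasureTheory Set

/-- Squared Euclidean norm of a vector. -/
noncomputable def esq {ι : Type*} [Fintype ι] (v : ι → ℝ) : ℝ := ∑ i, v i ^ 2

/-- The DG-in-time bilinear form
`A(z,v) = Σₙ ∫_{Iₙ} (K̃ ż + A z)·v dt + Σ_{n=1}^{N−1} (K̃[z]ₙ)·v(tₙ⁺) + (K̃ z(0⁺))·v(0⁺)`,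
where a piecewise-smooth function `z` is represented by the family `Z` of its smooth
extensions from the slabs `Iₙ = (t_{n−1}, tₙ]` (so `z = Z n` on `Iₙ`,
`z(tₙ⁺) = Z (n+1) (t n)`, `z(tₙ⁻) = Z n (t n)`), and similarly for `v`. -/
noncomputable def dgBilin {d : ℕ}
    (Ktil Amat : Matrix (Fin d ⊕ Fin d) (Fin d ⊕ Fin d) ℝ)
    (N : ℕ) (t : ℕ → ℝ) (Z V : ℕ → ℝ → (Fin d ⊕ Fin d) → ℝ) : ℝ :=
  (∑ n ∈ Finset.Icc 1 N, ∫ s in (t (n-1))..(t n),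
      (Ktil.mulVec (deriv (Z n) s) + Amat.mulVec (Z n s)) ⬝ᵥ V n s)
  + (∑ n ∈ Finset.Icc 1 (N-1), Ktil.mulVec (Z (n+1) (t n) - Z n (t n)) ⬝ᵥ V (n+1) (t n))
  + Ktil.mulVec (Z 1 (t 0)) ⬝ᵥ V 1 (t 0)

/-- The squared DG energy norm
`|||z|||² = Σₙ ∫_{Iₙ} |L̃ z|² dt + ½|K̃^{1/2} z(0⁺)|² + ½ Σ_{n=1}^{N−1} |K̃^{1/2}[z]ₙ|²
           + ½|K̃^{1/2} z(T⁻)|²`,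
with `z` represented slab-wise by `Z` as in `dgBilin`. -/
noncomputable def dgNormSq {d : ℕ}
    (Ltil Ksqrt : Matrix (Fin d ⊕ Fin d) (Fin d ⊕ Fin d) ℝ)
    (N : ℕ) (t : ℕ → ℝ) (Z : ℕ → ℝ → (Fin d ⊕ Fin d) → ℝ) : ℝ :=
  (∑ n ∈ Finset.Icc 1 N, ∫ s in (t (n-1))..(t n), esq (Ltil.mulVec (Z n s)))
  + (1/2) * esq (Ksqrt.mulVec (Z 1 (t 0)))
  + (1/2) * ∑ n ∈ Finset.Icc 1 (N-1), esq (Ksqrt.mulVec (Z (n+1) (t n) - Z n (t n)))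
  + (1/2) * esq (Ksqrt.mulVec (Z N (t N)))

open scoped ComplexOrder in
/-- The square root `PosSemidef.sqrt` of the older Mathlib (removed since), with its old
definition. -/
noncomputable def Matrix.PosSemidef.sqrt {n 𝕜 : Type*} [Fintype n] [DecidableEq n] [RCLike 𝕜]
    {A : Matrix n n 𝕜} (hA : A.PosSemidef) : Matrix n n 𝕜 :=
  (hA.1.eigenvectorUnitary : Matrix n n 𝕜) * diagonal ((↑) ∘ (√·) ∘ hA.1.eigenvalues) *
    (star (hA.1.eigenvectorUnitary : Matrix n n 𝕜))

lemma Matrix.PosSemidef.sqrt_transpose {ι : Type*} [Fintype ι] [DecidableEq ι] {M : Matrix ι ι ℝ}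
    (hM : M.PosSemidef) : hM.sqrtᵀ = hM.sqrt := by
  have := isHermitian_mul_mul_conjTranspose (hM.1.eigenvectorUnitary : Matrix ι ι ℝ)
    (A := diagonal ((↑) ∘ (√·) ∘ hM.1.eigenvalues)) (isHermitian_diagonal_of_self_adjoint _
      (by ext i; simp [star_trivial]))
  exact this

lemma Matrix.PosSemidef.sqrt_mul_self {ι : Type*} [Fintype ι] [DecidableEq ι] {M : Matrix ι ι ℝ}
    (hM : M.PosSemidef) : hM.sqrt * hM.sqrt = M := by
  have hU : star (hM.1.eigenvectorUnitary : Matrix ι ι ℝ) * (hM.1.eigenvectorUnitary : Matrix ι ι ℝ) = 1 :=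
    Unitary.coe_star_mul_self _
  have hD : diagonal ((↑) ∘ (√·) ∘ hM.1.eigenvalues) * diagonal ((↑) ∘ (√·) ∘ hM.1.eigenvalues)
      = diagonal (RCLike.ofReal ∘ hM.1.eigenvalues : ι → ℝ) := by
    rw [diagonal_mul_diagonal]; congr 1; ext i
    simp [Real.mul_self_sqrt (hM.eigenvalues_nonneg i)]
  conv_rhs => rw [hM.1.spectral_theorem]
  simp only [Matrix.PosSemidef.sqrt, Unitary.conjStarAlgAut_apply]
  rw [← hD]
  simp only [Matrix.mul_assoc]
  rw [← Matrix.mul_assoc (star _) (hM.1.eigenvectorUnitary : Matrix ι ι ℝ), hU, Matrix.one_mul]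
  rfl

lemma esq_eq_dot {ι : Type*} [Fintype ι] (v : ι → ℝ) : esq v = v ⬝ᵥ v := by
  simp [esq, dotProduct, sq]

lemma dot_symm {ι : Type*} [Fintype ι] (M : Matrix ι ι ℝ) (hM : Mᵀ = M)
    (a b : ι → ℝ) : M *ᵥ a ⬝ᵥ b = M *ᵥ b ⬝ᵥ a := by
  rw [dotProduct_comm, Matrix.dotProduct_mulVec, ← Matrix.mulVec_transpose, hM]

lemma esq_sqrt {ι : Type*} [Fintype ι] [DecidableEq ι] {M : Matrix ι ι ℝ}
    (hM : M.PosSemidef) (w : ι → ℝ) : esq (hM.sqrt *ᵥ w) = M *ᵥ w ⬝ᵥ w := by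
  have hs : hM.sqrtᵀ = hM.sqrt := hM.sqrt_transpose
  rw [esq_eq_dot, Matrix.dotProduct_mulVec, ← Matrix.mulVec_transpose, hs,
    Matrix.mulVec_mulVec, hM.sqrt_mul_self]

lemma esq_sum_elim {α β : Type*} [Fintype α] [Fintype β] (u : α → ℝ) (v : β → ℝ) :
    esq (Sum.elim u v) = esq u + esq v := by
  simp [esq, Fintype.sum_sum_type]

lemma quad_hasDerivAt {ι : Type*} [Fintype ι] (M : Matrix ι ι ℝ) (hM : Mᵀ = M)
    {g : ℝ → ι → ℝ} {g' : ι → ℝ} {s : ℝ} (hg : HasDerivAt g g' s) :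
    HasDerivAt (fun s => M *ᵥ g s ⬝ᵥ g s) (2 * (M *ᵥ g' ⬝ᵥ g s)) s := by
  have h1 : ∀ i, HasDerivAt (fun s => (M *ᵥ g s) i) ((M *ᵥ g') i) s := by
    intro i
    simpa [Matrix.mulVec, dotProduct] using
      HasDerivAt.fun_sum (fun j (_ : j ∈ Finset.univ) =>
        ((hasDerivAt_pi.mp hg j).const_mul (M i j)))
  have h2 : HasDerivAt (fun s => M *ᵥ g s ⬝ᵥ g s)
      (∑ i : ι, ((M *ᵥ g') i * g s i + (M *ᵥ g s) i * g' i)) s := by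
    simpa [dotProduct] using
      HasDerivAt.fun_sum (fun i (_ : i ∈ Finset.univ) => (h1 i).mul (hasDerivAt_pi.mp hg i))
  convert h2 using 1
  have h3 : M *ᵥ g s ⬝ᵥ g' = M *ᵥ g' ⬝ᵥ g s := dot_symm M hM _ _
  simp only [Finset.sum_add_distrib]
  rw [show (∑ i : ι, (M *ᵥ g') i * g s i) = M *ᵥ g' ⬝ᵥ g s from rfl,
    show (∑ i : ι, (M *ᵥ g s) i * g' i) = M *ᵥ g s ⬝ᵥ g' from rfl, h3]
  ring

lemma cont_dot {ι : Type*} [Fintype ι] (M : Matrix ι ι ℝ) {f g : ℝ → ι → ℝ}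
    (hf : Continuous f) (hg : Continuous g) :
    Continuous fun s => M *ᵥ f s ⬝ᵥ g s := by
  simp only [Matrix.mulVec, dotProduct]
  exact continuous_finset_sum _ fun i _ =>
    (continuous_finset_sum _ fun j _ =>
      (continuous_const.mul ((continuous_apply j).comp hf))).mul
      ((continuous_apply i).comp hg)

lemma cont_esq {ι : Type*} [Fintype ι] (M : Matrix ι ι ℝ) {f : ℝ → ι → ℝ}
    (hf : Continuous f) : Continuous fun s => esq (M *ᵥ f s) := by
  simp only [esq, Matrix.mulVec, dotProduct]
  exact continuous_finset_sum _ fun i _ =>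
    (continuous_finset_sum _ fun j _ =>
      (continuous_const.mul ((continuous_apply j).comp hf))).pow 2

lemma ftc_quad {ι : Type*} [Fintype ι] (M : Matrix ι ι ℝ) (hM : Mᵀ = M)
    {Z : ℝ → ι → ℝ} (hZ : ContDiff ℝ 1 Z) (a b : ℝ) :
    ∫ s in a..b, M *ᵥ deriv Z s ⬝ᵥ Z s
      = (1/2) * (M *ᵥ Z b ⬝ᵥ Z b) - (1/2) * (M *ᵥ Z a ⬝ᵥ Z a) := by
  have hd : ∀ s ∈ Set.uIcc a b, HasDerivAt (fun s => (1/2) * (M *ᵥ Z s ⬝ᵥ Z s))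
      (M *ᵥ deriv Z s ⬝ᵥ Z s) s := by
    intro s _
    have h := (quad_hasDerivAt M hM ((hZ.differentiable one_ne_zero).differentiableAt.hasDerivAt
      (x := s))).const_mul (1/2)
    rw [show M *ᵥ deriv Z s ⬝ᵥ Z s = 1/2 * (2 * (M *ᵥ deriv Z s ⬝ᵥ Z s)) by ring]
    exact h
  have hcont : Continuous fun s => M *ᵥ deriv Z s ⬝ᵥ Z s :=
    cont_dot M (hZ.continuous_deriv le_rfl) (hZ.continuous)
  exact intervalIntegral.integral_eq_sub_of_hasDerivAt hd (hcont.intervalIntegrable a b)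

lemma shift_sum (f : ℕ → ℝ) : ∀ M : ℕ, ∑ n ∈ Finset.Icc 1 (M+1), f (n-1)
    = f 0 + ∑ n ∈ Finset.Icc 1 M, f n := by
  intro M
  induction M with
  | zero => simp
  | succ m ih =>
      rw [Finset.sum_Icc_succ_top (by omega), ih, Finset.sum_Icc_succ_top (by omega)]
      norm_num
      ring

lemma Ktil_symm {d : ℕ} (K P : Matrix (Fin d) (Fin d) ℝ) (hK : K.PosDef) (hP : P.PosDef) :
    (Matrix.fromBlocks K 0 0 P)ᵀ = Matrix.fromBlocks K 0 0 P := by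
  have h1 : Kᵀ = K := hK.isHermitian
  have h2 : Pᵀ = P := hP.isHermitian
  rw [Matrix.fromBlocks_transpose, h1, h2]
  simp

lemma Amat_dot {d : ℕ} (K L : Matrix (Fin d) (Fin d) ℝ) (hK : Kᵀ = K)
    (hL : L.PosDef) (z : Fin d ⊕ Fin d → ℝ) :
    (Matrix.fromBlocks 0 (-K) K L) *ᵥ z ⬝ᵥ z
      = esq ((Matrix.fromBlocks 0 0 0 hL.posSemidef.sqrt :
          Matrix (Fin d ⊕ Fin d) (Fin d ⊕ Fin d) ℝ) *ᵥ z) := by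
  have hdot : ∀ u v : Fin d → ℝ,
      Sum.elim u v ⬝ᵥ z = u ⬝ᵥ (z ∘ Sum.inl) + v ⬝ᵥ (z ∘ Sum.inr) := by
    intro u v
    conv_lhs => rw [← Sum.elim_comp_inl_inr z]
    rw [sumElim_dotProduct_sumElim]
  rw [Matrix.fromBlocks_mulVec, Matrix.fromBlocks_mulVec, hdot]
  simp only [Matrix.zero_mulVec, zero_add, add_zero, Matrix.neg_mulVec,
    neg_dotProduct, add_dotProduct]
  rw [esq_sum_elim, dot_symm K hK (z ∘ Sum.inr) (z ∘ Sum.inl),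
    esq_sqrt hL.posSemidef]
  simp [esq]


/-- With `P, L, K` symmetric positive definite,
`K̃ = [[K,0],[0,P]]`, `A = [[0,−K],[K,L]]`, `L̃ = [[0,0],[0,L^{1/2}]]`, and a partition
`0 = t₀ < ⋯ < t_N = T`, every function `z` whose restriction to each closed slab extends
to a continuously differentiable function (represented by the extensions `Z n`) satisfies
the coercivity identity `A(z,z) = |||z|||²`. -/
theorem stmt_2 {d N : ℕ} (hN : 1 ≤ N)
    (P L K : Matrix (Fin d) (Fin d) ℝ) (hP : P.PosDef) (hL : L.PosDef) (hK : K.PosDef)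
    (hKP : (Matrix.fromBlocks K 0 0 P).PosDef)
    (T : ℝ) (hT : 0 < T) (t : ℕ → ℝ) (ht0 : t 0 = 0) (htN : t N = T)
    (hmono : ∀ n < N, t n < t (n+1))
    (Z : ℕ → ℝ → (Fin d ⊕ Fin d) → ℝ)
    (hZ : ∀ n ∈ Finset.Icc 1 N, ContDiff ℝ 1 (Z n)) :
    dgBilin (Matrix.fromBlocks K 0 0 P) (Matrix.fromBlocks 0 (-K) K L) N t Z Z
      = dgNormSq (Matrix.fromBlocks 0 0 0 hL.posSemidef.sqrt)
          hKP.posSemidef.sqrt N t Z := by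
  classical
  have hKsym : Kᵀ = K := hK.isHermitian
  have hKtsym : (Matrix.fromBlocks K 0 0 P)ᵀ = Matrix.fromBlocks K 0 0 P :=
    Ktil_symm K P hK hP
  unfold dgBilin dgNormSq
  -- rewrite integrals using FTC
  have hI : ∀ n ∈ Finset.Icc 1 N,
      (∫ s in t (n-1)..t n,
        ((Matrix.fromBlocks K 0 0 P) *ᵥ deriv (Z n) s + (Matrix.fromBlocks 0 (-K) K L) *ᵥ Z n s) ⬝ᵥ Z n s)
      = (∫ s in t (n-1)..t n, esq ((Matrix.fromBlocks 0 0 0 hL.posSemidef.sqrt : Matrix (Fin d ⊕ Fin d) (Fin d ⊕ Fin d) ℝ) *ᵥ Z n s))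
        + ((1/2) * ((Matrix.fromBlocks K 0 0 P) *ᵥ Z n (t n) ⬝ᵥ Z n (t n))
           - (1/2) * ((Matrix.fromBlocks K 0 0 P) *ᵥ Z n (t (n-1)) ⬝ᵥ Z n (t (n-1)))) := by
    intro n hn
    have hz := hZ n hn
    have hpt : ∀ s, ((Matrix.fromBlocks K 0 0 P) *ᵥ deriv (Z n) s + (Matrix.fromBlocks 0 (-K) K L) *ᵥ Z n s) ⬝ᵥ Z n s
        = ((Matrix.fromBlocks K 0 0 P) *ᵥ deriv (Z n) s ⬝ᵥ Z n s) + esq ((Matrix.fromBlocks 0 0 0 hL.posSemidef.sqrt : Matrix (Fin d ⊕ Fin d) (Fin d ⊕ Fin d) ℝ) *ᵥ Z n s) := by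
      intro s
      rw [add_dotProduct, Amat_dot K L hKsym hL]
    simp only [hpt]
    rw [intervalIntegral.integral_add
      ((cont_dot (Matrix.fromBlocks K 0 0 P) (hz.continuous_deriv le_rfl) hz.continuous).intervalIntegrable _ _)
      ((cont_esq (Matrix.fromBlocks 0 0 0 hL.posSemidef.sqrt : Matrix (Fin d ⊕ Fin d) (Fin d ⊕ Fin d) ℝ) hz.continuous).intervalIntegrable _ _),
      ftc_quad (Matrix.fromBlocks K 0 0 P) hKtsym hz]
    ring
  rw [Finset.sum_congr rfl hI, Finset.sum_add_distrib]
  -- rewrite jump terms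
  have hJ : ∀ n ∈ Finset.Icc 1 (N-1),
      (Matrix.fromBlocks K 0 0 P) *ᵥ (Z (n+1) (t n) - Z n (t n)) ⬝ᵥ Z (n+1) (t n)
      = (1/2) * esq (hKP.posSemidef.sqrt *ᵥ (Z (n+1) (t n) - Z n (t n)))
        + ((1/2) * ((Matrix.fromBlocks K 0 0 P) *ᵥ Z (n+1) (t n) ⬝ᵥ Z (n+1) (t n))
           - (1/2) * ((Matrix.fromBlocks K 0 0 P) *ᵥ Z n (t n) ⬝ᵥ Z n (t n))) := by
    intro n _
    rw [esq_sqrt hKP.posSemidef]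
    set a := Z n (t n)
    set b := Z (n+1) (t n)
    have hs : (Matrix.fromBlocks K 0 0 P) *ᵥ a ⬝ᵥ b = (Matrix.fromBlocks K 0 0 P) *ᵥ b ⬝ᵥ a := dot_symm (Matrix.fromBlocks K 0 0 P) hKtsym a b
    simp only [Matrix.mulVec_sub, sub_dotProduct, dotProduct_sub]
    linarith
  rw [Finset.sum_congr rfl hJ, Finset.sum_add_distrib]
  -- rewrite squared-norm boundary terms
  rw [esq_sqrt hKP.posSemidef (Z 1 (t 0)), esq_sqrt hKP.posSemidef (Z N (t N))]
  -- reindex the b_{n-1} sum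
  obtain ⟨M, rfl⟩ : ∃ M, N = M + 1 := ⟨N - 1, by omega⟩
  simp only [Nat.add_sub_cancel]
  have hre : ∑ x ∈ Finset.Icc 1 (M+1), (1/2) * ((Matrix.fromBlocks K 0 0 P) *ᵥ Z x (t (x-1)) ⬝ᵥ Z x (t (x-1)))
      = (1/2) * ((Matrix.fromBlocks K 0 0 P) *ᵥ Z 1 (t 0) ⬝ᵥ Z 1 (t 0))
        + ∑ x ∈ Finset.Icc 1 M, (1/2) * ((Matrix.fromBlocks K 0 0 P) *ᵥ Z (x+1) (t x) ⬝ᵥ Z (x+1) (t x)) := by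
    rw [show (∑ x ∈ Finset.Icc 1 (M+1), (1/2) * ((Matrix.fromBlocks K 0 0 P) *ᵥ Z x (t (x-1)) ⬝ᵥ Z x (t (x-1))))
        = ∑ x ∈ Finset.Icc 1 (M+1),
            (fun k => (1/2) * ((Matrix.fromBlocks K 0 0 P) *ᵥ Z (k+1) (t k) ⬝ᵥ Z (k+1) (t k))) (x-1) from
      Finset.sum_congr rfl (fun n hn => by
        have h1 : 1 ≤ n := (Finset.mem_Icc.mp hn).1
        have h2 : n - 1 + 1 = n := by omega
        simp only [h2])]
    exact shift_sum (fun k => (1/2) * ((Matrix.fromBlocks K 0 0 P) *ᵥ Z (k+1) (t k) ⬝ᵥ Z (k+1) (t k))) M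
  rw [Finset.sum_sub_distrib, Finset.sum_sub_distrib, hre,
    Finset.sum_Icc_succ_top (show 1 ≤ M + 1 by omega)
      (fun x => (1/2) * ((Matrix.fromBlocks K 0 0 P) *ᵥ Z x (t x) ⬝ᵥ Z x (t x))), Finset.mul_sum]
  ring
end

section
/- Let 0 = t₀ < t₁ < ⋯ < t_N = T be a partition of [0,T], r₁,…,r_N ∈ ℕ, and let u : (0,T] → ℝ^d be such that u restricted to each slab I_n = (t_{n−1}, t_n] is (componentwise) a polynomial of degree ≤ r_n. Suppose that: (i) for every n = 1,…,N and every polynomial test function v of degree ≤ r_n with values in ℝ^d, ∫_{I_n} u̇ · v dt + [u]_{n−1} · v(t_{n−1}^+) = 0, where [u]_0 = u(0^+) − u₀⁻ for a prescribed left value u₀⁻ ∈ ℝ^d; (ii) [u]_n = 0 for n = 1,…,N−1; (iii) u(T^−) = 0; and (iv) [u]_0 = 0. Then u ≡ 0 on (0,T] (and u₀⁻ = 0). -/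
open Matrix MeasureTheory Set

/-- `v : ℝ → ℝ^d` is (componentwise) a polynomial of degree at most `r`. -/
def IsPolyDeg {d : ℕ} (r : ℕ) (v : ℝ → Fin d → ℝ) : Prop :=
  ∀ i, ∃ p : Polynomial ℝ, p.natDegree ≤ r ∧ ∀ s, v s i = p.eval s

/-- A polynomial whose square has zero integral over a nontrivial interval is zero. -/
lemma sq_poly_int_zero {a b : ℝ} (hab : a < b) (q : Polynomial ℝ)
    (h : (∫ s in a..b, (q.eval s)^2) = 0) : q = 0 := by
  by_contra hq
  have hcont : Continuous fun s : ℝ => (q.eval s)^2 := (q.continuous).pow 2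
  have hint : IntervalIntegrable (fun s => (q.eval s)^2) volume a b :=
    hcont.intervalIntegrable a b
  have hnn : 0 ≤ᵐ[volume.restrict (Set.Ioc a b)] fun s => (q.eval s)^2 :=
    Filter.Eventually.of_forall fun s => sq_nonneg _
  have hae := (intervalIntegral.integral_eq_zero_iff_of_le_of_nonneg_ae hab.le hnn hint).mp h
  -- the set where the function is nonzero has measure zero
  have hroots : Set.Finite {x : ℝ | q.IsRoot x} := Polynomial.finite_setOf_isRoot hq
  have hsub : Set.Ioc a b ⊆ {x : ℝ | q.IsRoot x} ∪ {s ∈ Set.Ioc a b | (q.eval s)^2 ≠ 0} := by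
    intro x hx
    by_cases hqx : (q.eval x)^2 = 0
    · left
      simpa [Polynomial.IsRoot, pow_eq_zero_iff] using hqx
    · right; exact ⟨hx, hqx⟩
  have hnull : volume {s ∈ Set.Ioc a b | (q.eval s)^2 ≠ 0} = 0 := by
    have h1 : ∀ᵐ x ∂(volume.restrict (Set.Ioc a b)), (q.eval x)^2 = (0:ℝ) := by
      simpa [Filter.EventuallyEq] using hae
    rw [MeasureTheory.ae_restrict_iff' measurableSet_Ioc, MeasureTheory.ae_iff] at h1
    convert h1 using 2
    ext x
    simp only [Set.mem_setOf_eq]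
    tauto
  have : volume (Set.Ioc a b) = 0 := by
    refine le_antisymm ?_ zero_le
    calc volume (Set.Ioc a b)
        ≤ volume ({x : ℝ | q.IsRoot x} ∪ {s ∈ Set.Ioc a b | (q.eval s)^2 ≠ 0}) :=
          measure_mono hsub
      _ ≤ volume {x : ℝ | q.IsRoot x} + volume {s ∈ Set.Ioc a b | (q.eval s)^2 ≠ 0} :=
          measure_union_le _ _
      _ = 0 := by rw [hroots.measure_zero, hnull, add_zero]
  rw [Real.volume_Ioc] at this
  have hba : b - a ≤ 0 := by simpa [ENNReal.ofReal_eq_zero] using this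
  linarith

/-- Let `0 = t₀ < ⋯ < t_N = T` and let `u` be slab-wise polynomial of
degree `≤ rₙ` (represented by the polynomial extensions `U n` from the slabs
`Iₙ = (t_{n−1}, tₙ]`).  If
(i) for every `n` and every polynomial test function `v` of degree `≤ rₙ`,
    `∫_{Iₙ} u̇·v dt + [u]_{n−1}·v(t_{n−1}⁺) = 0`, with `[u]₀ = u(0⁺) − u₀⁻`;
(ii) `[u]ₙ = 0` for `n = 1,…,N−1`;
(iii) `u(T⁻) = 0`; and (iv) `[u]₀ = 0`;
then `u ≡ 0` on `(0,T]` and `u₀⁻ = 0`. -/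
theorem stmt_3 {d N : ℕ} (hd : 1 ≤ d) (hN : 1 ≤ N)
    (T : ℝ) (hT : 0 < T) (t : ℕ → ℝ) (ht0 : t 0 = 0) (htN : t N = T)
    (hmono : ∀ n < N, t n < t (n+1))
    (r : ℕ → ℕ) (U : ℕ → ℝ → Fin d → ℝ) (u0m : Fin d → ℝ)
    (hpoly : ∀ n ∈ Finset.Icc 1 N, IsPolyDeg (r n) (U n))
    (hweak : ∀ n ∈ Finset.Icc 1 N, ∀ v : ℝ → Fin d → ℝ, IsPolyDeg (r n) v →
      (∫ s in (t (n-1))..(t n), deriv (U n) s ⬝ᵥ v s)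
        + (U n (t (n-1)) - (if n = 1 then u0m else U (n-1) (t (n-1)))) ⬝ᵥ v (t (n-1)) = 0)
    (hjump : ∀ n ∈ Finset.Icc 1 (N-1), U (n+1) (t n) = U n (t n))
    (hTend : U N (t N) = 0)
    (h0 : U 1 (t 0) = u0m) :
    (∀ n ∈ Finset.Icc 1 N, ∀ s ∈ Set.Ioc (t (n-1)) (t n), U n s = 0) ∧ u0m = 0 := by
  -- Step 1: each U n is constant.
  have hconst : ∀ n ∈ Finset.Icc 1 N, ∀ s s' : ℝ, U n s = U n s' := by
    intro n hn s s'
    obtain ⟨hn1, hnN⟩ := Finset.mem_Icc.mp hn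
    -- choose polynomials
    choose P hPdeg hPeval using hpoly n hn
    -- derivative of U n
    have hUderiv : ∀ x : ℝ, deriv (U n) x = fun i => ((P i).derivative.eval x) := by
      intro x
      have : HasDerivAt (U n) (fun i => (P i).derivative.eval x) x := by
        rw [hasDerivAt_pi]
        intro i
        have : (fun y => U n y i) = fun y => (P i).eval y := funext fun y => hPeval i y
        rw [this]
        exact (P i).hasDerivAt x
      exact this.deriv
    -- test function v = deriv (U n)
    have hvpoly : IsPolyDeg (r n) (deriv (U n)) := by
      intro i
      refine ⟨(P i).derivative, ?_, fun x => by rw [hUderiv x]⟩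
      exact le_trans (Polynomial.natDegree_derivative_le (P i)) (by have := hPdeg i; omega)
    have hw := hweak n hn (deriv (U n)) hvpoly
    -- the jump term vanishes
    have hjz : (U n (t (n-1)) - (if n = 1 then u0m else U (n-1) (t (n-1)))) = 0 := by
      by_cases h1 : n = 1
      · subst h1; simp [h0]
      · have hn2 : 2 ≤ n := by omega
        have hm : n - 1 ∈ Finset.Icc 1 (N-1) := Finset.mem_Icc.mpr ⟨by omega, by omega⟩
        have := hjump (n-1) hm
        rw [show n - 1 + 1 = n by omega] at this
        simp [h1, this]
    rw [hjz] at hw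
    simp only [zero_dotProduct, add_zero] at hw
    -- rewrite the integrand componentwise
    have hab : t (n-1) < t n := by
      have := hmono (n-1) (by omega)
      rwa [show n - 1 + 1 = n by omega] at this
    have hint_eq : (∫ s in (t (n-1))..(t n), deriv (U n) s ⬝ᵥ deriv (U n) s)
        = ∑ i : Fin d, ∫ s in (t (n-1))..(t n), ((P i).derivative.eval s)^2 := by
      rw [← intervalIntegral.integral_finset_sum]
      · congr 1
        ext s
        rw [hUderiv s]
        simp [dotProduct, sq]
      · intro i _
        exact ((P i).derivative.continuous.pow 2).intervalIntegrable _ _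
    rw [hint_eq] at hw
    -- each summand is nonneg, sum is zero, so each is zero
    have hterm : ∀ i : Fin d, (∫ s in (t (n-1))..(t n), ((P i).derivative.eval s)^2) = 0 := by
      have hnn : ∀ i ∈ Finset.univ, (0:ℝ) ≤ ∫ s in (t (n-1))..(t n), ((P i).derivative.eval s)^2 :=
        fun i _ => intervalIntegral.integral_nonneg hab.le (fun x _ => sq_nonneg _)
      intro i
      exact (Finset.sum_eq_zero_iff_of_nonneg hnn).mp hw i (Finset.mem_univ i)
    -- hence each derivative polynomial is zero, so each P i is constant
    funext i
    have hq0 : (P i).derivative = 0 := sq_poly_int_zero hab _ (hterm i)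
    have := Polynomial.eq_C_of_derivative_eq_zero hq0
    rw [hPeval i s, hPeval i s', this]
    simp
  -- Step 2: backward induction gives U n ≡ 0.
  have hzero : ∀ k n, n + k = N → 1 ≤ n → U n (t n) = 0 := by
    intro k
    induction k with
    | zero => intro n hnk _; simp at hnk; subst hnk; exact hTend
    | succ k ih =>
      intro n hnk hn1
      have hnext : U (n+1) (t (n+1)) = 0 := ih (n+1) (by omega) (by omega)
      have hc : U (n+1) (t n) = 0 := by rw [hconst (n+1) (Finset.mem_Icc.mpr ⟨by omega, by omega⟩) (t n) (t (n+1))]; exact hnext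
      have := hjump n (Finset.mem_Icc.mpr ⟨hn1, by omega⟩)
      rw [← this]; exact hc
  constructor
  · intro n hn s _
    obtain ⟨hn1, hnN⟩ := Finset.mem_Icc.mp hn
    rw [hconst n hn s (t n)]
    exact hzero (N - n) n (by omega) hn1
  · rw [← h0, hconst 1 (Finset.mem_Icc.mpr ⟨le_refl 1, hN⟩) (t 0) (t 1)]
    exact hzero (N - 1) 1 (by omega) le_rfl
end

section
/- With the matrices, partition, DG space V_DG^r, bilinear form A(·,·) and linear functional F(·) as in the context, for any f ∈ L²((0,T]; ℝ^d) and any û₀, û₁ ∈ ℝ^d, the discrete problem 'find z_DG ∈ V_DG^r such that A(z_DG, v) = F(v) for all v ∈ V_DG^r' admits a unique solution. -/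
set_option linter.unusedSectionVars false
set_option linter.unusedVariables false
set_option maxHeartbeats 1000000



open Matrix MeasureTheory Set

/-- `v : ℝ → ℝ^{2d}` is (componentwise) a polynomial of degree at most `r`. -/
def IsPolyDegV {d : ℕ} (r : ℕ) (v : ℝ → (Fin d ⊕ Fin d) → ℝ) : Prop :=
  ∀ i, ∃ p : Polynomial ℝ, p.natDegree ≤ r ∧ ∀ s, v s i = p.eval s

/-- The DG right-hand side functional
`F(v) = Σₙ ∫_{Iₙ} F·v dt + (K̃ z₀)·v(0⁺)` with `F = (0, f)`. -/
noncomputable def dgLin {d : ℕ} (Ktil : Matrix (Fin d ⊕ Fin d) (Fin d ⊕ Fin d) ℝ)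
    (N : ℕ) (t : ℕ → ℝ) (f : ℝ → Fin d → ℝ) (z0 : (Fin d ⊕ Fin d) → ℝ)
    (V : ℕ → ℝ → (Fin d ⊕ Fin d) → ℝ) : ℝ :=
  (∑ n ∈ Finset.Icc 1 N, ∫ s in (t (n-1))..(t n),
      Sum.elim (0 : Fin d → ℝ) (f s) ⬝ᵥ V n s)
  + Ktil.mulVec z0 ⬝ᵥ V 1 (t 0)

/-- Membership in the DG space `V_DG^r`: slab-wise polynomial of degree `≤ rₙ`,
admitting a continuous slab-wise polynomial reconstruction `ẑ = (û,ŵ)` with `û′ = ŵ`,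
satisfying the reconstruction identity and `ẑ(t_{n−1}) = z(t_{n−1}⁻)` for `n ≥ 2`
(with `z(0⁻) := ẑ(0)` in the jump `[z]₀`). -/
def MemDG {d : ℕ} (N : ℕ) (t : ℕ → ℝ) (r : ℕ → ℕ)
    (Z : ℕ → ℝ → (Fin d ⊕ Fin d) → ℝ) : Prop :=
  (∀ n ∈ Finset.Icc 1 N, IsPolyDegV (r n) (Z n)) ∧
  ∃ Zh : ℕ → ℝ → (Fin d ⊕ Fin d) → ℝ,
    (∀ n ∈ Finset.Icc 1 N, IsPolyDegV (r n) (Zh n)) ∧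
    (∀ n ∈ Finset.Icc 1 (N-1), Zh (n+1) (t n) = Zh n (t n)) ∧
    (∀ n ∈ Finset.Icc 1 N, ∀ s : ℝ,
       deriv (fun τ => fun i => Zh n τ (Sum.inl i)) s = fun i => Zh n s (Sum.inr i)) ∧
    (∀ n ∈ Finset.Icc 1 N, ∀ v : ℝ → (Fin d ⊕ Fin d) → ℝ, IsPolyDegV (r n) v →
       (∫ s in (t (n-1))..(t n), deriv (Zh n) s ⬝ᵥ v s)
         = (∫ s in (t (n-1))..(t n), deriv (Z n) s ⬝ᵥ v s)
           + (Z n (t (n-1)) - (if n = 1 then Zh 1 (t 0) else Z (n-1) (t (n-1))))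
              ⬝ᵥ v (t (n-1))) ∧
    (∀ n ∈ Finset.Icc 2 N, Zh n (t (n-1)) = Z (n-1) (t (n-1)))


namespace DGAux
open Polynomial
noncomputable section


variable {ι : Type*} [Fintype ι]

/-- dot product of polynomial vectors -/
def dotP (p q : ι → ℝ[X]) : ℝ[X] := ∑ i, p i * q i

/-- matrix times polynomial vector -/
def mulVecP (M : Matrix ι ι ℝ) (p : ι → ℝ[X]) : ι → ℝ[X] := fun i => ∑ j, C (M i j) * p j

/-- componentwise derivative -/
def dP (p : ι → ℝ[X]) : ι → ℝ[X] := fun i => derivative (p i)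

/-- componentwise evaluation -/
def evv (p : ι → ℝ[X]) (s : ℝ) : ι → ℝ := fun i => (p i).eval s

lemma eval_dotP (p q : ι → ℝ[X]) (s : ℝ) : (dotP p q).eval s = evv p s ⬝ᵥ evv q s := by
  simp [dotP, dotProduct, evv, eval_finset_sum]

lemma evv_mulVecP (M : Matrix ι ι ℝ) (p : ι → ℝ[X]) (s : ℝ) :
    evv (mulVecP M p) s = M.mulVec (evv p s) := by
  funext i; simp [mulVecP, Matrix.mulVec, dotProduct, evv, eval_finset_sum]

@[simp] lemma evv_add (p q : ι → ℝ[X]) (s : ℝ) : evv (p + q) s = evv p s + evv q s := by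
  funext i; simp [evv]

@[simp] lemma evv_smul (c : ℝ) (p : ι → ℝ[X]) (s : ℝ) : evv (c • p) s = c • evv p s := by
  funext i; simp [evv]

@[simp] lemma evv_zero (s : ℝ) : evv (0 : ι → ℝ[X]) s = 0 := by funext i; simp [evv]

lemma dotP_add_left (p q r : ι → ℝ[X]) : dotP (p + q) r = dotP p r + dotP q r := by
  simp [dotP, add_mul, Finset.sum_add_distrib]

lemma dotP_add_right (p q r : ι → ℝ[X]) : dotP p (q + r) = dotP p q + dotP p r := by
  simp [dotP, mul_add, Finset.sum_add_distrib]

lemma dotP_smul_left (c : ℝ) (p r : ι → ℝ[X]) : dotP (c • p) r = c • dotP p r := by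
  simp [dotP, Finset.smul_sum, smul_mul_assoc]

lemma dotP_smul_right (c : ℝ) (p r : ι → ℝ[X]) : dotP p (c • r) = c • dotP p r := by
  simp [dotP, Finset.smul_sum, smul_eq_C_mul]; congr 1; funext i; ring

lemma mulVecP_add (M : Matrix ι ι ℝ) (p q : ι → ℝ[X]) :
    mulVecP M (p + q) = mulVecP M p + mulVecP M q := by
  funext i; simp [mulVecP, mul_add, Finset.sum_add_distrib]

lemma mulVecP_smul (M : Matrix ι ι ℝ) (c : ℝ) (p : ι → ℝ[X]) :
    mulVecP M (c • p) = c • mulVecP M p := by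
  funext i; simp [mulVecP, Finset.smul_sum, smul_eq_C_mul]; congr 1; funext j; ring

lemma dP_add (p q : ι → ℝ[X]) : dP (p + q) = dP p + dP q := by funext i; simp [dP]

lemma dP_smul (c : ℝ) (p : ι → ℝ[X]) : dP (c • p) = c • dP p := by funext i; simp [dP]

lemma dP_mulVecP (M : Matrix ι ι ℝ) (p : ι → ℝ[X]) :
    dP (mulVecP M p) = mulVecP M (dP p) := by
  funext i; simp [dP, mulVecP, derivative_mul]

lemma derivative_dotP (p q : ι → ℝ[X]) :
    derivative (dotP p q) = dotP (dP p) q + dotP p (dP q) := by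
  simp [dotP, dP, derivative_sum, derivative_mul, Finset.sum_add_distrib]

lemma dotP_comm (p q : ι → ℝ[X]) : dotP p q = dotP q p := by
  simp [dotP, mul_comm]

lemma dotP_mulVecP_symm {M : Matrix ι ι ℝ} (hM : ∀ i j, M i j = M j i) (p q : ι → ℝ[X]) :
    dotP (mulVecP M p) q = dotP (mulVecP M q) p := by
  simp only [dotP, mulVecP, Finset.sum_mul]
  rw [Finset.sum_comm]
  congr 1; funext i; congr 1; funext j
  rw [hM j i]; ring





lemma hasDerivAt_evv (p : ι → ℝ[X]) (s : ℝ) :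
    HasDerivAt (fun τ => evv p τ) (evv (dP p) s) s :=
  hasDerivAt_pi.2 fun i => (p i).hasDerivAt s

lemma deriv_evv (p : ι → ℝ[X]) (s : ℝ) :
    deriv (fun τ => evv p τ) s = evv (dP p) s :=
  (hasDerivAt_evv p s).deriv

/-- interval integral of a polynomial -/
def ipol (a b : ℝ) (p : ℝ[X]) : ℝ := ∫ s in a..b, p.eval s

lemma ipol_add (a b : ℝ) (p q : ℝ[X]) : ipol a b (p + q) = ipol a b p + ipol a b q := by
  unfold ipol
  simp only [eval_add]
  exact intervalIntegral.integral_add ((p.continuous).intervalIntegrable a b)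
      ((q.continuous).intervalIntegrable a b)

lemma ipol_smul (a b : ℝ) (c : ℝ) (p : ℝ[X]) : ipol a b (c • p) = c * ipol a b p := by
  unfold ipol
  simp only [smul_eq_C_mul, eval_mul, eval_C]
  exact intervalIntegral.integral_const_mul c _

lemma ipol_derivative (a b : ℝ) (p : ℝ[X]) :
    ipol a b (derivative p) = p.eval b - p.eval a := by
  unfold ipol
  exact intervalIntegral.integral_eq_sub_of_hasDerivAt
    (fun x _ => p.hasDerivAt x) (((derivative p).continuous).intervalIntegrable a b)

/-- continuous, ae-nonneg function with zero integral vanishes on the open interval -/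
lemma eqzero_of_integral_zero {a b : ℝ} (hab : a < b) {g : ℝ → ℝ} (hg : Continuous g)
    (hnn : ∀ s ∈ Set.Ioc a b, 0 ≤ g s) (hz : (∫ s in a..b, g s) = 0) :
    ∀ s ∈ Set.Ioo a b, g s = 0 := by
  have h1 : (∫ s in Set.Ioc a b, g s) = 0 := by
    rwa [intervalIntegral.integral_of_le hab.le] at hz
  have hint : IntegrableOn g (Set.Ioc a b) := hg.integrableOn_Ioc
  have hae : g =ᵐ[volume.restrict (Set.Ioc a b)] 0 := by
    refine (integral_eq_zero_iff_of_nonneg_ae ?_ hint).1 h1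
    exact (ae_restrict_iff' measurableSet_Ioc).2 (Filter.Eventually.of_forall hnn)
  -- the set where g ≠ 0 inside Ioo is open with measure zero, hence empty
  have hU : IsOpen (Set.Ioo a b ∩ {s | g s ≠ 0}) :=
    isOpen_Ioo.inter (isOpen_ne.preimage hg)
  have hU0 : volume (Set.Ioo a b ∩ {s | g s ≠ 0}) = 0 := by
    have h2 : volume.restrict (Set.Ioc a b) {s | g s ≠ 0} = 0 := by
      have := hae
      rw [Filter.EventuallyEq, ae_iff] at this
      simpa using this
    rw [Measure.restrict_apply] at h2
    · exact measure_mono_null (by intro x hx; exact ⟨hx.2, Set.mem_of_mem_of_subset hx.1 Set.Ioo_subset_Ioc_self⟩) h2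
    · exact (isOpen_ne.preimage hg).measurableSet
  have := (hU.eq_empty_of_measure_zero hU0)
  intro s hs
  by_contra hne
  exact absurd (Set.eq_empty_iff_forall_notMem.1 this s ⟨hs, hne⟩) (fun h => h)

/-- polynomial vanishing on an open interval is zero -/
lemma poly_eq_zero_of_eqzero_Ioo {a b : ℝ} (hab : a < b) {p : ℝ[X]}
    (h : ∀ s ∈ Set.Ioo a b, p.eval s = 0) : p = 0 := by
  refine p.eq_zero_of_infinite_isRoot ?_
  refine Set.Infinite.mono (fun s hs => h s hs) ?_
  exact Set.Ioo_infinite hab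





variable {d : ℕ}

lemma dotP_block_self {K L : Matrix (Fin d) (Fin d) ℝ} (hK : ∀ i j, K i j = K j i)
    (q : (Fin d ⊕ Fin d) → ℝ[X]) :
    dotP (mulVecP (Matrix.fromBlocks 0 (-K) K L) q) q
      = dotP (mulVecP L (fun i => q (Sum.inr i))) (fun i => q (Sum.inr i)) := by
  simp only [dotP, mulVecP, Fintype.sum_sum_type, Matrix.fromBlocks_apply₁₁,
    Matrix.fromBlocks_apply₁₂, Matrix.fromBlocks_apply₂₁, Matrix.fromBlocks_apply₂₂,
    Matrix.zero_apply, Matrix.neg_apply, map_zero, zero_mul, Finset.sum_const_zero, zero_add,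
    map_neg, neg_mul, Finset.sum_neg_distrib, add_mul, Finset.sum_add_distrib]
  have h1 : ∑ i, (∑ j, C (K i j) * q (Sum.inr j)) * q (Sum.inl i)
      = ∑ i, (∑ j, C (K i j) * q (Sum.inl j)) * q (Sum.inr i) := by
    simp only [Finset.sum_mul]
    rw [Finset.sum_comm]
    congr 1; funext i; congr 1; funext j
    rw [hK j i]; ring
  rw [h1]
  ring

lemma quad_fromBlocks_diag (K P : Matrix (Fin d) (Fin d) ℝ) (x : (Fin d ⊕ Fin d) → ℝ) :
    (Matrix.fromBlocks K 0 0 P).mulVec x ⬝ᵥ x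
      = (K.mulVec (fun i => x (Sum.inl i)) ⬝ᵥ fun i => x (Sum.inl i))
        + (P.mulVec (fun i => x (Sum.inr i)) ⬝ᵥ fun i => x (Sum.inr i)) := by
  simp [Matrix.mulVec, dotProduct, Fintype.sum_sum_type, add_mul, Finset.sum_add_distrib]

lemma posdef_real_pos {M : Matrix (Fin d) (Fin d) ℝ} (hM : M.PosDef) {x : Fin d → ℝ}
    (hx : x ≠ 0) : 0 < M.mulVec x ⬝ᵥ x := by
  have := hM.dotProduct_mulVec_pos hx
  rwa [show star x = x from funext fun i => rfl, dotProduct_comm] at this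

lemma posdef_real_nonneg {M : Matrix (Fin d) (Fin d) ℝ} (hM : M.PosDef) (x : Fin d → ℝ) :
    0 ≤ M.mulVec x ⬝ᵥ x := by
  have := hM.posSemidef.dotProduct_mulVec_nonneg x
  rwa [show star x = x from funext fun i => rfl, dotProduct_comm] at this

lemma quad_eq_zero_iff {M : Matrix (Fin d) (Fin d) ℝ} (hM : M.PosDef) {x : Fin d → ℝ}
    (h : M.mulVec x ⬝ᵥ x = 0) : x = 0 := by
  by_contra hx
  exact absurd h (ne_of_gt (posdef_real_pos hM hx))

lemma quadKt_zero {K P : Matrix (Fin d) (Fin d) ℝ} (hK : K.PosDef) (hP : P.PosDef)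
    {x : (Fin d ⊕ Fin d) → ℝ} (h : (Matrix.fromBlocks K 0 0 P).mulVec x ⬝ᵥ x = 0) :
    x = 0 := by
  rw [quad_fromBlocks_diag] at h
  have h1 := posdef_real_nonneg hK (fun i => x (Sum.inl i))
  have h2 := posdef_real_nonneg hP (fun i => x (Sum.inr i))
  have e1 : K.mulVec (fun i => x (Sum.inl i)) ⬝ᵥ (fun i => x (Sum.inl i)) = 0 := by linarith
  have e2 : P.mulVec (fun i => x (Sum.inr i)) ⬝ᵥ (fun i => x (Sum.inr i)) = 0 := by linarith
  have z1 := quad_eq_zero_iff hK e1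
  have z2 := quad_eq_zero_iff hP e2
  funext i
  rcases i with i | i
  · exact congrFun z1 i
  · exact congrFun z2 i

lemma quadKt_nonneg {K P : Matrix (Fin d) (Fin d) ℝ} (hK : K.PosDef) (hP : P.PosDef)
    (x : (Fin d ⊕ Fin d) → ℝ) : 0 ≤ (Matrix.fromBlocks K 0 0 P).mulVec x ⬝ᵥ x := by
  rw [quad_fromBlocks_diag]
  exact add_nonneg (posdef_real_nonneg hK _) (posdef_real_nonneg hP _)


variable {ι : Type*} [Fintype ι] {d : ℕ}

/-- slab integrand polynomial -/
def slabP (Kt Am : Matrix ι ι ℝ) (q v : ι → ℝ[X]) : ℝ[X] :=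
  dotP (mulVecP Kt (dP q) + mulVecP Am q) v

def tF (Q : ℕ → ι → ℝ[X]) : ℕ → ℝ → ι → ℝ := fun n s => evv (Q n) s

/-- the DG bilinear form realized on polynomial data -/
def bexp (Kt Am : Matrix ι ι ℝ) (N : ℕ) (t : ℕ → ℝ) (Q R : ℕ → ι → ℝ[X]) : ℝ :=
  (∑ n ∈ Finset.Icc 1 N, ipol (t (n-1)) (t n) (slabP Kt Am (Q n) (R n)))
  + (∑ n ∈ Finset.Icc 1 (N-1),
      Kt.mulVec (evv (Q (n+1)) (t n) - evv (Q n) (t n)) ⬝ᵥ evv (R (n+1)) (t n))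
  + Kt.mulVec (evv (Q 1) (t 0)) ⬝ᵥ evv (R 1) (t 0)

lemma dgBilin_tF (Kt Am : Matrix (Fin d ⊕ Fin d) (Fin d ⊕ Fin d) ℝ) (N : ℕ) (t : ℕ → ℝ)
    (Q R : ℕ → (Fin d ⊕ Fin d) → ℝ[X]) :
    dgBilin Kt Am N t (tF Q) (tF R) = bexp Kt Am N t Q R := by
  unfold dgBilin bexp tF ipol
  congr 1
  congr 1
  apply Finset.sum_congr rfl
  intro n _
  apply intervalIntegral.integral_congr
  intro s _
  show (Kt *ᵥ deriv (fun τ => evv (Q n) τ) s + Am *ᵥ evv (Q n) s) ⬝ᵥ evv (R n) s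
      = eval s (slabP Kt Am (Q n) (R n))
  rw [slabP, eval_dotP, evv_add, evv_mulVecP, evv_mulVecP, deriv_evv]

lemma bexp_add_left (Kt Am : Matrix ι ι ℝ) (N : ℕ) (t : ℕ → ℝ) (Q Q' R : ℕ → ι → ℝ[X]) :
    bexp Kt Am N t (Q + Q') R = bexp Kt Am N t Q R + bexp Kt Am N t Q' R := by
  unfold bexp slabP
  have h : ∀ n, (Q + Q') n = Q n + Q' n := fun n => rfl
  simp only [h, dP_add, mulVecP_add, evv_add]
  have hs : ∀ n, mulVecP Kt (dP (Q n) + dP (Q' n)) + mulVecP Am (Q n + Q' n)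
      = (mulVecP Kt (dP (Q n)) + mulVecP Am (Q n)) + (mulVecP Kt (dP (Q' n)) + mulVecP Am (Q' n)) := by
    intro n; rw [mulVecP_add, mulVecP_add]; abel
  simp only [hs, dotP_add_left, ipol_add, Finset.sum_add_distrib]
  have hj : ∀ n, (evv (Q (n+1)) (t n) + evv (Q' (n+1)) (t n)) - (evv (Q n) (t n) + evv (Q' n) (t n))
      = (evv (Q (n+1)) (t n) - evv (Q n) (t n)) + (evv (Q' (n+1)) (t n) - evv (Q' n) (t n)) := by
    intro n; abel
  simp only [hj, Matrix.mulVec_add, add_dotProduct, Finset.sum_add_distrib]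
  ring

lemma bexp_smul_left (Kt Am : Matrix ι ι ℝ) (N : ℕ) (t : ℕ → ℝ) (c : ℝ) (Q R : ℕ → ι → ℝ[X]) :
    bexp Kt Am N t (c • Q) R = c * bexp Kt Am N t Q R := by
  unfold bexp slabP
  have h : ∀ n, (c • Q) n = c • Q n := fun n => rfl
  simp only [h, dP_smul, mulVecP_smul, evv_smul, ← smul_add, dotP_smul_left, ipol_smul,
    ← smul_sub, Matrix.mulVec_smul, smul_dotProduct, smul_eq_mul, ← Finset.mul_sum]
  ring

lemma bexp_add_right (Kt Am : Matrix ι ι ℝ) (N : ℕ) (t : ℕ → ℝ) (Q R R' : ℕ → ι → ℝ[X]) :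
    bexp Kt Am N t Q (R + R') = bexp Kt Am N t Q R + bexp Kt Am N t Q R' := by
  unfold bexp slabP
  have h : ∀ n, (R + R') n = R n + R' n := fun n => rfl
  simp only [h, dotP_add_right, ipol_add, Finset.sum_add_distrib, evv_add, dotProduct_add]
  ring

lemma bexp_smul_right (Kt Am : Matrix ι ι ℝ) (N : ℕ) (t : ℕ → ℝ) (c : ℝ) (Q R : ℕ → ι → ℝ[X]) :
    bexp Kt Am N t Q (c • R) = c * bexp Kt Am N t Q R := by
  unfold bexp slabP
  have h : ∀ n, (c • R) n = c • R n := fun n => rfl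
  simp only [h, dotP_smul_right, ipol_smul, ← Finset.mul_sum, evv_smul, dotProduct_smul,
    smul_eq_mul]
  ring

lemma fromBlocks_diag_symm {d : ℕ} {K P : Matrix (Fin d) (Fin d) ℝ}
    (hK : ∀ i j, K i j = K j i) (hP : ∀ i j, P i j = P j i) :
    ∀ i j, (Matrix.fromBlocks K 0 0 P : Matrix (Fin d ⊕ Fin d) (Fin d ⊕ Fin d) ℝ) i j
      = (Matrix.fromBlocks K 0 0 P) j i := by
  rintro (i|i) (j|j) <;> simp [hK i j, hP i j]

lemma symm_of_posdef {d : ℕ} {M : Matrix (Fin d) (Fin d) ℝ} (hM : M.PosDef) :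
    ∀ i j, M i j = M j i := by
  intro i j
  have h := hM.1
  have := congrFun (congrFun h i) j
  simpa [Matrix.conjTranspose_apply] using this.symm

lemma slabP_self {d : ℕ} {K P L : Matrix (Fin d) (Fin d) ℝ}
    (hKsym : ∀ i j, K i j = K j i) (hPsym : ∀ i j, P i j = P j i)
    (q : (Fin d ⊕ Fin d) → ℝ[X]) :
    slabP (Matrix.fromBlocks K 0 0 P) (Matrix.fromBlocks 0 (-K) K L) q q
      = (2⁻¹ : ℝ) • derivative (dotP (mulVecP (Matrix.fromBlocks K 0 0 P) q) q)
        + dotP (mulVecP L (fun i => q (Sum.inr i))) (fun i => q (Sum.inr i)) := by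
  have hKt := fromBlocks_diag_symm hKsym hPsym
  have hX : dotP (mulVecP (Matrix.fromBlocks K 0 0 P) q) (dP q)
      = dotP (mulVecP (Matrix.fromBlocks K 0 0 P) (dP q)) q := dotP_mulVecP_symm hKt q (dP q)
  have hD : derivative (dotP (mulVecP (Matrix.fromBlocks K 0 0 P) q) q)
      = dotP (mulVecP (Matrix.fromBlocks K 0 0 P) (dP q)) q
        + dotP (mulVecP (Matrix.fromBlocks K 0 0 P) (dP q)) q := by
    rw [derivative_dotP, dP_mulVecP, hX]
  rw [slabP, dotP_add_left, hD, dotP_block_self hKsym q]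
  congr 1
  rw [← two_smul ℝ (dotP (mulVecP (Matrix.fromBlocks K 0 0 P) (dP q)) q), smul_smul]
  norm_num

lemma sum_telescope_Icc (N : ℕ) (g : ℕ → ℝ) :
    ∑ n ∈ Finset.Icc 1 N, (g n - g (n-1)) = g N - g 0 := by
  induction N with
  | zero => simp
  | succ m ih =>
      rw [Finset.sum_Icc_succ_top (by omega : 1 ≤ m + 1), ih]
      simp only [Nat.add_sub_cancel]
      ring

/-- the energy identity for `bexp` on continuous data -/
lemma bexp_self {d N : ℕ} {K P L : Matrix (Fin d) (Fin d) ℝ}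
    (hKsym : ∀ i j, K i j = K j i) (hPsym : ∀ i j, P i j = P j i)
    (hN : 1 ≤ N) (t : ℕ → ℝ) (Q : ℕ → (Fin d ⊕ Fin d) → ℝ[X])
    (hc : ∀ n, 1 ≤ n → n + 1 ≤ N → ∀ i, (Q (n+1) i).eval (t n) = (Q n i).eval (t n)) :
    bexp (Matrix.fromBlocks K 0 0 P) (Matrix.fromBlocks 0 (-K) K L) N t Q Q
      = 2⁻¹ * ((Matrix.fromBlocks K 0 0 P).mulVec (evv (Q N) (t N)) ⬝ᵥ evv (Q N) (t N))
        + 2⁻¹ * ((Matrix.fromBlocks K 0 0 P).mulVec (evv (Q 1) (t 0)) ⬝ᵥ evv (Q 1) (t 0))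
        + ∑ n ∈ Finset.Icc 1 N, ipol (t (n-1)) (t n)
            (dotP (mulVecP L (fun i => Q n (Sum.inr i))) (fun i => Q n (Sum.inr i))) := by
  classical
  set Kt := Matrix.fromBlocks K 0 0 P with hKtdef
  -- values of the K̃-quadratic polynomial at nodes
  set g : ℕ → ℝ := fun m =>
    if m < N then Kt.mulVec (evv (Q (m+1)) (t m)) ⬝ᵥ evv (Q (m+1)) (t m)
    else Kt.mulVec (evv (Q N) (t m)) ⬝ᵥ evv (Q N) (t m) with hgdef
  have hquad : ∀ n τ, (dotP (mulVecP Kt (Q n)) (Q n)).eval τ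
      = Kt.mulVec (evv (Q n) τ) ⬝ᵥ evv (Q n) τ := by
    intro n τ; rw [eval_dotP, evv_mulVecP]
  have hgN : g N = Kt.mulVec (evv (Q N) (t N)) ⬝ᵥ evv (Q N) (t N) := by
    simp [hgdef]
  have hg0 : g 0 = Kt.mulVec (evv (Q 1) (t 0)) ⬝ᵥ evv (Q 1) (t 0) := by
    have h0N : 0 < N := hN
    simp [hgdef, h0N]
  -- the slab integral splits into a telescoping part and the L-part
  have hslab : ∀ n ∈ Finset.Icc 1 N,
      ipol (t (n-1)) (t n) (slabP Kt (Matrix.fromBlocks 0 (-K) K L) (Q n) (Q n))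
        = 2⁻¹ * (g n - g (n-1))
          + ipol (t (n-1)) (t n)
              (dotP (mulVecP L (fun i => Q n (Sum.inr i))) (fun i => Q n (Sum.inr i))) := by
    intro n hn
    rw [Finset.mem_Icc] at hn
    rw [slabP_self hKsym hPsym, ipol_add, ipol_smul, ipol_derivative]
    congr 2
    rw [hquad n (t n), hquad n (t (n-1))]
    have hBn : g (n-1) = Kt.mulVec (evv (Q n) (t (n-1))) ⬝ᵥ evv (Q n) (t (n-1)) := by
      have hlt : n - 1 < N := by omega
      have : n - 1 + 1 = n := by omega
      simp only [hgdef, if_pos hlt, this]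
    have hAn : g n = Kt.mulVec (evv (Q n) (t n)) ⬝ᵥ evv (Q n) (t n) := by
      by_cases hnN : n < N
      · have he : evv (Q (n+1)) (t n) = evv (Q n) (t n) := by
          funext i; exact hc n hn.1 (by omega) i
        simp only [hgdef, if_pos hnN, he]
      · have hnn : n = N := by omega
        subst hnn
        simp only [hgdef, if_neg hnN]
    rw [hAn, hBn]
  -- jump terms vanish
  have hjump : ∀ n ∈ Finset.Icc 1 (N-1),
      Kt.mulVec (evv (Q (n+1)) (t n) - evv (Q n) (t n)) ⬝ᵥ evv (Q (n+1)) (t n) = 0 := by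
    intro n hn
    rw [Finset.mem_Icc] at hn
    have he : evv (Q (n+1)) (t n) = evv (Q n) (t n) := by
      funext i; exact hc n hn.1 (by omega) i
    rw [he, sub_self, Matrix.mulVec_zero, zero_dotProduct]
  rw [bexp]
  rw [Finset.sum_congr rfl hslab, Finset.sum_congr rfl hjump, Finset.sum_const_zero,
    Finset.sum_add_distrib, ← Finset.mul_sum, sum_telescope_Icc N g, hgN, hg0]
  ring

/-- the DG space as a submodule of slab-indexed polynomial vectors -/
def Sspace (d N : ℕ) (t : ℕ → ℝ) (r : ℕ → ℕ) :
    Submodule ℝ (ℕ → (Fin d ⊕ Fin d) → ℝ[X]) where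
  carrier := {Q | (∀ n, (n = 0 ∨ N < n) → Q n = 0) ∧
                  (∀ n i, (Q n i).natDegree ≤ r n) ∧
                  (∀ n i, derivative (Q n (Sum.inl i)) = Q n (Sum.inr i)) ∧
                  (∀ n, 1 ≤ n → n + 1 ≤ N → ∀ i, (Q (n+1) i).eval (t n) = (Q n i).eval (t n))}
  add_mem' := by
    rintro Q R ⟨hz, hd, hw, hc⟩ ⟨hz', hd', hw', hc'⟩
    refine ⟨fun n hn => by simp [hz n hn, hz' n hn], fun n i => ?_, fun n i => by
      simp [hw n i, hw' n i], fun n h1 h2 i => by simp [hc n h1 h2 i, hc' n h1 h2 i]⟩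
    exact le_trans (Polynomial.natDegree_add_le _ _) (max_le (hd n i) (hd' n i))
  zero_mem' := by
    refine ⟨fun n _ => rfl, fun n i => by simp, fun n i => by simp, fun n _ _ i => by simp⟩
  smul_mem' := by
    rintro c Q ⟨hz, hd, hw, hc⟩
    refine ⟨fun n hn => by simp [hz n hn], fun n i => ?_, fun n i => by
      simp [hw n i], fun n h1 h2 i => by simp [hc n h1 h2 i]⟩
    exact le_trans (Polynomial.natDegree_smul_le _ _) (hd n i)

instance Sspace_finiteDimensional (d N : ℕ) (t : ℕ → ℝ) (r : ℕ → ℕ) :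
    FiniteDimensional ℝ (Sspace d N t r) := by
  classical
  set Rm := (Finset.Icc 1 N).sup r with hRm
  let ψ : (ℕ → (Fin d ⊕ Fin d) → ℝ[X]) →ₗ[ℝ]
      (Fin (N+1) → (Fin d ⊕ Fin d) → Fin (Rm+1) → ℝ) :=
    { toFun := fun Q n i k => (Q (n : ℕ) i).coeff (k : ℕ)
      map_add' := fun Q R => by funext n i k; simp
      map_smul' := fun c Q => by funext n i k; simp }
  refine FiniteDimensional.of_injective (ψ.domRestrict (Sspace d N t r)) ?_
  rw [← LinearMap.ker_eq_bot, LinearMap.ker_eq_bot']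
  rintro ⟨Q, hz, hd, hw, hc⟩ hQ
  have hcoeff : ∀ n : Fin (N+1), ∀ i, ∀ k : Fin (Rm+1), (Q n i).coeff k = 0 := by
    intro n i k
    have h0 : ψ Q = 0 := hQ
    have := congrFun (congrFun (congrFun h0 n) i) k
    simpa [ψ] using this
  refine Subtype.ext ?_
  funext n i
  show Q n i = 0
  by_cases hn : n = 0 ∨ N < n
  · simp [hz n hn]
  · push_neg at hn
    obtain ⟨hn0, hnN⟩ := hn
    have hnN' : n ≤ N := hnN
    have hrn : r n ≤ Rm := Finset.le_sup (Finset.mem_Icc.2 ⟨Nat.one_le_iff_ne_zero.2 hn0, hnN'⟩)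
    apply Polynomial.ext
    intro k
    by_cases hk : k ≤ Rm
    · have := hcoeff ⟨n, Nat.lt_succ_of_le hnN'⟩ i ⟨k, Nat.lt_succ_of_le hk⟩
      simpa using this
    · push_neg at hk
      simp [Polynomial.coeff_eq_zero_of_natDegree_lt (lt_of_le_of_lt (le_trans (hd n i) hrn) hk)]


/-- coercivity: zero energy forces zero element of the DG space -/
lemma bexp_self_zero {d N : ℕ} {K P L : Matrix (Fin d) (Fin d) ℝ}
    (hK : K.PosDef) (hP : P.PosDef) (hL : L.PosDef)
    (hN : 1 ≤ N) (t : ℕ → ℝ) (hmono : ∀ n < N, t n < t (n+1)) (r : ℕ → ℕ)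
    (Q : ℕ → (Fin d ⊕ Fin d) → ℝ[X]) (hQ : Q ∈ Sspace d N t r)
    (h0 : bexp (Matrix.fromBlocks K 0 0 P) (Matrix.fromBlocks 0 (-K) K L) N t Q Q = 0) :
    Q = 0 := by
  classical
  obtain ⟨hz, hdeg, hw, hc⟩ := hQ
  have htlt : ∀ n, 1 ≤ n → n ≤ N → t (n-1) < t n := by
    intro n h1 h2
    have := hmono (n-1) (by omega)
    have heq : n - 1 + 1 = n := by omega
    rwa [heq] at this
  rw [bexp_self (symm_of_posdef hK) (symm_of_posdef hP) hN t Q hc] at h0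
  set Kt := Matrix.fromBlocks K 0 0 P with hKtdef
  -- nonnegativity of the three summands
  have hLnonneg : ∀ n ∈ Finset.Icc 1 N, 0 ≤ ipol (t (n-1)) (t n)
      (dotP (mulVecP L (fun i => Q n (Sum.inr i))) (fun i => Q n (Sum.inr i))) := by
    intro n hn
    rw [Finset.mem_Icc] at hn
    refine intervalIntegral.integral_nonneg (htlt n hn.1 hn.2).le ?_
    intro u _
    rw [eval_dotP, evv_mulVecP]
    exact posdef_real_nonneg hL _
  have hsum_nonneg : 0 ≤ ∑ n ∈ Finset.Icc 1 N, ipol (t (n-1)) (t n)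
      (dotP (mulVecP L (fun i => Q n (Sum.inr i))) (fun i => Q n (Sum.inr i))) :=
    Finset.sum_nonneg hLnonneg
  have hqN := quadKt_nonneg hK hP (evv (Q N) (t N))
  have hq0 := quadKt_nonneg hK hP (evv (Q 1) (t 0))
  have hq0' : Kt.mulVec (evv (Q 1) (t 0)) ⬝ᵥ evv (Q 1) (t 0) = 0 := by linarith
  have hsum0 : ∑ n ∈ Finset.Icc 1 N, ipol (t (n-1)) (t n)
      (dotP (mulVecP L (fun i => Q n (Sum.inr i))) (fun i => Q n (Sum.inr i))) = 0 := by
    linarith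
  -- each slab integral is zero, hence the w-part vanishes
  have hwzero : ∀ n, 1 ≤ n → n ≤ N → ∀ i, Q n (Sum.inr i) = 0 := by
    intro n h1 h2 i
    have hzero : ipol (t (n-1)) (t n)
        (dotP (mulVecP L (fun i => Q n (Sum.inr i))) (fun i => Q n (Sum.inr i))) = 0 :=
      (Finset.sum_eq_zero_iff_of_nonneg hLnonneg).1 hsum0 n (Finset.mem_Icc.2 ⟨h1, h2⟩)
    have hcont : Continuous fun s =>
        (dotP (mulVecP L (fun i => Q n (Sum.inr i))) (fun i => Q n (Sum.inr i))).eval s :=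
      Polynomial.continuous _
    have hev : ∀ s ∈ Set.Ioo (t (n-1)) (t n),
        (dotP (mulVecP L (fun i => Q n (Sum.inr i))) (fun i => Q n (Sum.inr i))).eval s = 0 := by
      apply eqzero_of_integral_zero (htlt n h1 h2) hcont
      · intro s _
        rw [eval_dotP, evv_mulVecP]; exact posdef_real_nonneg hL _
      · exact hzero
    apply poly_eq_zero_of_eqzero_Ioo (htlt n h1 h2)
    intro s hs
    have := hev s hs
    rw [eval_dotP, evv_mulVecP] at this
    have hx := quad_eq_zero_iff hL this
    exact congrFun hx i
  -- the u-part is slab-wise constant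
  have huconst : ∀ n, 1 ≤ n → n ≤ N → ∀ i, ∃ c, Q n (Sum.inl i) = C c := by
    intro n h1 h2 i
    have : derivative (Q n (Sum.inl i)) = 0 := by rw [hw n i, hwzero n h1 h2 i]
    have hdeg0 := Polynomial.natDegree_eq_zero_of_derivative_eq_zero this
    obtain ⟨c, hcq⟩ := Polynomial.natDegree_eq_zero.1 hdeg0
    exact ⟨c, hcq.symm⟩
  -- initial value is zero
  have hinit : evv (Q 1) (t 0) = 0 := quadKt_zero hK hP hq0'
  -- induct: u-part vanishes on every slab
  have huzero : ∀ n, 1 ≤ n → n ≤ N → ∀ i, Q n (Sum.inl i) = 0 := by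
    intro n
    induction n with
    | zero => omega
    | succ m ih =>
        intro h1 h2 i
        obtain ⟨c, hcq⟩ := huconst (m+1) h1 h2 i
        by_cases hm : m = 0
        · subst hm
          have h00 := congrFun hinit (Sum.inl i)
          rw [evv] at h00
          simp only [hcq, eval_C, Pi.zero_apply] at h00
          rw [hcq, h00, map_zero]
        · have hm1 : 1 ≤ m := by omega
          have hq_prev := ih hm1 (by omega) i
          have := hc m hm1 h2 (Sum.inl i)
          rw [hq_prev, hcq] at this
          simp only [eval_C, eval_zero] at this
          rw [hcq, this, map_zero]
  -- conclude
  funext n i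
  by_cases hn : n = 0 ∨ N < n
  · rw [hz n hn]; rfl
  · push_neg at hn
    rcases i with i | i
    · exact huzero n (by omega) (by omega) i
    · exact hwzero n (by omega) (by omega) i

lemma dotP_sub_left {ι : Type*} [Fintype ι] (p q r : ι → ℝ[X]) :
    dotP (p - q) r = dotP p r - dotP q r := by
  simp [dotP, sub_mul, Finset.sum_sub_distrib]

lemma ipol_sub (a b : ℝ) (p q : ℝ[X]) : ipol a b (p - q) = ipol a b p - ipol a b q := by
  have := ipol_add a b (p - q) q
  simp only [sub_add_cancel] at this
  linarith

lemma natDegree_shift_deriv_le {r : ℕ} {E : ℝ[X]} (hE : E.natDegree ≤ r) (a : ℝ) :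
    ((X - C a) * derivative E).natDegree ≤ r := by
  by_cases hD : derivative E = 0
  · simp [hD]
  · have h1 : 1 ≤ E.natDegree := by
      by_contra h
      push_neg at h
      interval_cases h' : E.natDegree
      · obtain ⟨c, rfl⟩ := Polynomial.natDegree_eq_zero.1 h'
        simp at hD
    refine le_trans (Polynomial.natDegree_mul_le) ?_
    have h2 : (X - C a : ℝ[X]).natDegree = 1 := Polynomial.natDegree_X_sub_C a
    have h3 := Polynomial.natDegree_derivative_le E
    omega

/-- key analytic step: the reconstruction must coincide with the solution slab-wise -/
lemma memDG_rep {d N : ℕ} (hN : 1 ≤ N) (t : ℕ → ℝ) (hmono : ∀ n < N, t n < t (n+1))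
    (r : ℕ → ℕ) (Z : ℕ → ℝ → (Fin d ⊕ Fin d) → ℝ) (hZ : MemDG N t r Z) :
    ∃ R ∈ Sspace d N t r, ∀ n, 1 ≤ n → n ≤ N → ∀ s, Z n s = tF R n s := by
  classical
  obtain ⟨hpolyZ, Zh, hpolyZh, hcontZh, hderivZh, hident, hmatchZh⟩ := hZ
  have htlt : ∀ n, 1 ≤ n → n ≤ N → t (n-1) < t n := by
    intro n h1 h2
    have := hmono (n-1) (by omega)
    have heq : n - 1 + 1 = n := by omega
    rwa [heq] at this
  -- main per-slab claim
  have main : ∀ n, 1 ≤ n → n ≤ N → ∃ q : (Fin d ⊕ Fin d) → ℝ[X],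
      (∀ i, (q i).natDegree ≤ r n) ∧ (∀ s i, Z n s i = (q i).eval s)
        ∧ (∀ s i, Zh n s i = (q i).eval s) := by
    intro n h1 h2
    have hnIcc : n ∈ Finset.Icc 1 N := Finset.mem_Icc.2 ⟨h1, h2⟩
    set a := t (n-1) with hadef
    set b := t n with hbdef
    have hab : a < b := htlt n h1 h2
    choose pz hpz using hpolyZ n hnIcc
    choose ph hph using hpolyZh n hnIcc
    have hZfun : Z n = fun s => evv pz s := by
      funext s i; exact (hpz i).2 s
    have hZhfun : Zh n = fun s => evv ph s := by
      funext s i; exact (hph i).2 s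
    set D : (Fin d ⊕ Fin d) → ℝ[X] := fun i => derivative (ph i - pz i) with hDdef
    set jump : (Fin d ⊕ Fin d) → ℝ :=
      Z n a - (if n = 1 then Zh 1 (t 0) else Z (n-1) a) with hjumpdef
    -- the identity, in polynomial form
    have hkey : ∀ vP : (Fin d ⊕ Fin d) → ℝ[X], (∀ i, (vP i).natDegree ≤ r n) →
        ipol a b (dotP (dP ph) vP) = ipol a b (dotP (dP pz) vP) + jump ⬝ᵥ evv vP a := by
      intro vP hvP
      have hident' := hident n hnIcc (fun s i => (vP i).eval s)
        (fun i => ⟨vP i, hvP i, fun s => rfl⟩)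
      rw [hZfun, hZhfun] at hident'
      have e1 : ∀ (p : (Fin d ⊕ Fin d) → ℝ[X]),
          (∫ s in a..b, deriv (fun τ => evv p τ) s ⬝ᵥ (fun i => (vP i).eval s))
            = ipol a b (dotP (dP p) vP) := by
        intro p
        rw [ipol]
        apply intervalIntegral.integral_congr
        intro s _
        show deriv (fun τ => evv p τ) s ⬝ᵥ (fun i => (vP i).eval s) = eval s (dotP (dP p) vP)
        rw [deriv_evv, eval_dotP]
        rfl
      rw [e1 ph, e1 pz] at hident'
      have hjj : ((fun s => evv pz s) (t (n-1)) - if n = 1 then Zh 1 (t 0) else Z (n-1) (t (n-1)))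
          = jump := by
        rw [hjumpdef, hZfun]
      rw [← hjj]
      exact hident'
    -- test with v = (X - a) * D : derivative parts agree
    have hDzero : ∀ i, D i = 0 := by
      have hvP : ∀ i, (((X : ℝ[X]) - C a) * D i).natDegree ≤ r n := by
        intro i
        apply natDegree_shift_deriv_le
        exact le_trans (Polynomial.natDegree_sub_le _ _) (max_le (hph i).1 (hpz i).1)
      have hk := hkey (fun i => (X - C a) * D i) hvP
      have hva : evv (fun i => ((X : ℝ[X]) - C a) * D i) a = 0 := by
        funext i; simp [evv]
      rw [hva, dotProduct_zero, add_zero] at hk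
      have hsub : ipol a b (dotP (dP ph) fun i => ((X : ℝ[X]) - C a) * D i)
          - ipol a b (dotP (dP pz) fun i => ((X : ℝ[X]) - C a) * D i)
          = ipol a b (dotP D fun i => ((X : ℝ[X]) - C a) * D i) := by
        rw [← ipol_sub, ← dotP_sub_left]
        congr 2
        funext i
        simp [dP, hDdef]
      rw [hk, sub_self] at hsub
      have hfact : dotP D (fun i => ((X : ℝ[X]) - C a) * D i) = (X - C a) * dotP D D := by
        rw [dotP, dotP, Finset.mul_sum]
        congr 1; funext i; ring
      rw [hfact] at hsub
      -- zero integral of a nonneg continuous function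
      have hev0 : ∀ s ∈ Set.Ioo a b, (((X : ℝ[X]) - C a) * dotP D D).eval s = 0 := by
        apply eqzero_of_integral_zero hab (Polynomial.continuous _)
        · intro s hs
          rw [eval_mul, eval_dotP]
          apply mul_nonneg
          · simp only [eval_sub, eval_X, eval_C, sub_nonneg]
            exact hs.1.le
          · exact Finset.sum_nonneg fun i _ => mul_self_nonneg _
        · exact hsub.symm
      intro i
      apply poly_eq_zero_of_eqzero_Ioo hab
      intro s hs
      have h0 := hev0 s hs
      rw [eval_mul, eval_dotP] at h0
      have hfac : (0:ℝ) < eval s ((X : ℝ[X]) - C a) := by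
        simp only [eval_sub, eval_X, eval_C, sub_pos]
        exact hs.1
      have hdd : evv D s ⬝ᵥ evv D s = 0 := by
        rcases mul_eq_zero.1 h0 with h | h
        · exact absurd h (ne_of_gt hfac)
        · exact h
      have := (Finset.sum_eq_zero_iff_of_nonneg
        (fun j (_ : j ∈ Finset.univ) => mul_self_nonneg (evv D s j))).1 hdd i (Finset.mem_univ i)
      exact mul_self_eq_zero.1 this
    have hdPeq : dP ph = dP pz := by
      funext i
      have := hDzero i
      rw [hDdef] at this
      simp only [map_sub] at this
      have h' := sub_eq_zero.1 this
      exact h'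
    -- test with constant vectors : the jump vanishes
    have hjump0 : ∀ i, jump i = 0 := by
      intro i
      have hvP : ∀ j, ((if j = i then (1:ℝ[X]) else 0)).natDegree ≤ r n := by
        intro j; split <;> simp
      have hk := hkey (fun j => if j = i then 1 else 0) hvP
      rw [hdPeq] at hk
      have : jump ⬝ᵥ evv (fun j => if j = i then (1:ℝ[X]) else 0) a = 0 := by linarith
      rw [dotProduct] at this
      have he : ∀ j, jump j * evv (fun j => if j = i then (1:ℝ[X]) else 0) a j
          = if j = i then jump j else 0 := by
        intro j
        by_cases hj : j = i <;> simp [evv, hj]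
      rw [Finset.sum_congr rfl (fun j _ => he j)] at this
      simpa using this
    -- the constant difference between ph and pz is zero
    have hEconst : ∀ i, ∃ c, ph i - pz i = C c := by
      intro i
      have hd0 : derivative (ph i - pz i) = 0 := hDzero i
      obtain ⟨c, hcq⟩ := Polynomial.natDegree_eq_zero.1
        (Polynomial.natDegree_eq_zero_of_derivative_eq_zero hd0)
      exact ⟨c, hcq.symm⟩
    have hpheq : ∀ i, ph i = pz i := by
      intro i
      obtain ⟨c, hcq⟩ := hEconst i
      have hvala : (ph i - pz i).eval a = c := by rw [hcq, eval_C]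
      have hc0 : c = 0 := by
        have hji := hjump0 i
        rw [hjumpdef] at hji
        by_cases hn1 : n = 1
        · subst hn1
          rw [if_pos rfl] at hji
          simp only [Pi.sub_apply] at hji
          have e1 : Z 1 a i = eval a (pz i) := (hpz i).2 a
          have e2 : Zh 1 (t 0) i = eval (t 0) (ph i) := (hph i).2 (t 0)
          have ha0 : a = t 0 := hadef
          rw [e1, e2] at hji
          rw [← hvala, eval_sub]
          rw [ha0] at hji ⊢
          linarith
        · rw [if_neg hn1] at hji
          simp only [Pi.sub_apply] at hji
          have hmatch := hmatchZh n (Finset.mem_Icc.2 ⟨by omega, h2⟩)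
          have hZha : Zh n a i = Z (n-1) a i := congrFun hmatch i
          have e1 : Z n a i = eval a (pz i) := (hpz i).2 a
          have e2 : Zh n a i = eval a (ph i) := (hph i).2 a
          rw [e1, ← hZha, e2] at hji
          rw [← hvala, eval_sub]
          linarith
      rw [← sub_eq_zero, hcq, hc0, map_zero]
    exact ⟨pz, fun i => (hpz i).1, fun s i => (hpz i).2 s,
      fun s i => by rw [← hpheq i]; exact (hph i).2 s⟩
  -- package into an element of the DG space
  have main' : ∀ n, ∃ q : (Fin d ⊕ Fin d) → ℝ[X], 1 ≤ n → n ≤ N →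
      (∀ i, (q i).natDegree ≤ r n) ∧ (∀ s i, Z n s i = (q i).eval s)
        ∧ (∀ s i, Zh n s i = (q i).eval s) := by
    intro n
    by_cases hn : 1 ≤ n ∧ n ≤ N
    · obtain ⟨q, hq⟩ := main n hn.1 hn.2
      exact ⟨q, fun _ _ => hq⟩
    · exact ⟨0, fun h1 h2 => absurd ⟨h1, h2⟩ hn⟩
  choose q hq using main'
  refine ⟨fun n => if 1 ≤ n ∧ n ≤ N then q n else 0, ⟨?_, ?_, ?_, ?_⟩, ?_⟩
  · intro n hn
    show (if 1 ≤ n ∧ n ≤ N then q n else 0) = 0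
    rw [if_neg (by omega : ¬(1 ≤ n ∧ n ≤ N))]
  · intro n i
    show ((if 1 ≤ n ∧ n ≤ N then q n else 0) i).natDegree ≤ r n
    by_cases hn : 1 ≤ n ∧ n ≤ N
    · rw [if_pos hn]; exact ((hq n hn.1 hn.2).1 i)
    · rw [if_neg hn]; simp
  · intro n i
    show derivative ((if 1 ≤ n ∧ n ≤ N then q n else 0) (Sum.inl i))
        = (if 1 ≤ n ∧ n ≤ N then q n else 0) (Sum.inr i)
    by_cases hn : 1 ≤ n ∧ n ≤ N
    · rw [if_pos hn]
      have hder := hderivZh n (Finset.mem_Icc.2 hn)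
      have hfun : (fun τ => fun j : Fin d => Zh n τ (Sum.inl j))
          = fun τ => evv (fun j : Fin d => q n (Sum.inl j)) τ := by
        funext τ j; exact (hq n hn.1 hn.2).2.2 τ (Sum.inl j)
      have hev : ∀ s, eval s (derivative (q n (Sum.inl i))) = eval s (q n (Sum.inr i)) := by
        intro s
        have h' := hder s
        rw [hfun] at h'
        rw [deriv_evv] at h'
        have h'' := congrFun h' i
        rw [(hq n hn.1 hn.2).2.2 s (Sum.inr i)] at h''
        exact h''
      exact Polynomial.funext hev
    · rw [if_neg hn]; simp
  · intro n h1 h2 i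
    have hn : 1 ≤ n ∧ n ≤ N := ⟨h1, by omega⟩
    have hn' : 1 ≤ n+1 ∧ n+1 ≤ N := ⟨by omega, h2⟩
    show eval (t n) ((if 1 ≤ n+1 ∧ n+1 ≤ N then q (n+1) else 0) i)
        = eval (t n) ((if 1 ≤ n ∧ n ≤ N then q n else 0) i)
    rw [if_pos hn', if_pos hn]
    have hcont := hcontZh n (Finset.mem_Icc.2 ⟨h1, by omega⟩)
    have hci := congrFun hcont i
    rw [(hq (n+1) hn'.1 hn'.2).2.2 (t n) i, (hq n hn.1 hn.2).2.2 (t n) i] at hci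
    exact hci
  · intro n h1 h2 s
    funext i
    show Z n s i = evv (if 1 ≤ n ∧ n ≤ N then q n else 0) s i
    rw [if_pos (⟨h1, h2⟩ : 1 ≤ n ∧ n ≤ N)]
    exact (hq n h1 h2).2.1 s i

lemma memDG_of_S {d N : ℕ} (hN : 1 ≤ N) (t : ℕ → ℝ) (r : ℕ → ℕ)
    (R : ℕ → (Fin d ⊕ Fin d) → ℝ[X]) (hR : R ∈ Sspace d N t r) :
    MemDG N t r (tF R) := by
  obtain ⟨hz, hdeg, hw, hc⟩ := hR
  constructor
  · intro n _ i
    exact ⟨R n i, hdeg n i, fun s => rfl⟩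
  refine ⟨tF R, ?_, ?_, ?_, ?_, ?_⟩
  · intro n _ i
    exact ⟨R n i, hdeg n i, fun s => rfl⟩
  · intro n hn
    rw [Finset.mem_Icc] at hn
    funext i
    exact hc n hn.1 (by omega) i
  · intro n _ s
    have hfn : (fun τ => fun i : Fin d => tF R n τ (Sum.inl i))
        = fun τ => evv (fun i : Fin d => R n (Sum.inl i)) τ := rfl
    rw [hfn, deriv_evv]
    funext i
    show eval s (derivative (R n (Sum.inl i))) = eval s (R n (Sum.inr i))
    rw [hw n i]
  · intro n hn v _
    have hvec : (tF R n (t (n-1)) - if n = 1 then tF R 1 (t 0) else tF R (n-1) (t (n-1)))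
        = 0 := by
      by_cases hn1 : n = 1
      · subst hn1; rw [if_pos rfl]; simp
      · rw [if_neg hn1]
        rw [Finset.mem_Icc] at hn
        funext i
        have hcn := hc (n-1) (by omega) (by omega) i
        have hnn : n - 1 + 1 = n := by omega
        rw [hnn] at hcn
        show tF R n (t (n-1)) i - tF R (n-1) (t (n-1)) i = 0
        rw [show tF R n (t (n-1)) i = eval (t (n-1)) (R n i) from rfl,
            show tF R (n-1) (t (n-1)) i = eval (t (n-1)) (R (n-1) i) from rfl, hcn, sub_self]
    rw [hvec, zero_dotProduct, add_zero]
  · intro n hn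
    rw [Finset.mem_Icc] at hn
    funext i
    have hcn := hc (n-1) (by omega) (by omega) i
    have hnn : n - 1 + 1 = n := by omega
    rw [hnn] at hcn
    exact hcn

lemma dgBilin_congr_right {d N : ℕ} (hN : 1 ≤ N)
    (Kt Am : Matrix (Fin d ⊕ Fin d) (Fin d ⊕ Fin d) ℝ) (t : ℕ → ℝ)
    (Z V W : ℕ → ℝ → (Fin d ⊕ Fin d) → ℝ)
    (h : ∀ n, 1 ≤ n → n ≤ N → ∀ s, V n s = W n s) :
    dgBilin Kt Am N t Z V = dgBilin Kt Am N t Z W := by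
  unfold dgBilin
  congr 1
  · congr 1
    · apply Finset.sum_congr rfl
      intro n hn
      rw [Finset.mem_Icc] at hn
      apply intervalIntegral.integral_congr
      intro s _
      show _ ⬝ᵥ V n s = _ ⬝ᵥ W n s
      rw [h n hn.1 hn.2 s]
    · apply Finset.sum_congr rfl
      intro n hn
      rw [Finset.mem_Icc] at hn
      rw [h (n+1) (by omega) (by omega) (t n)]
  · rw [h 1 le_rfl hN (t 0)]

lemma dgBilin_congr_left {d N : ℕ} (hN : 1 ≤ N)
    (Kt Am : Matrix (Fin d ⊕ Fin d) (Fin d ⊕ Fin d) ℝ) (t : ℕ → ℝ)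
    (Z W V : ℕ → ℝ → (Fin d ⊕ Fin d) → ℝ)
    (h : ∀ n, 1 ≤ n → n ≤ N → ∀ s, Z n s = W n s) :
    dgBilin Kt Am N t Z V = dgBilin Kt Am N t W V := by
  have hfun : ∀ n, 1 ≤ n → n ≤ N → Z n = W n := by
    intro n h1 h2; funext s; exact h n h1 h2 s
  unfold dgBilin
  congr 1
  · congr 1
    · apply Finset.sum_congr rfl
      intro n hn
      rw [Finset.mem_Icc] at hn
      rw [hfun n hn.1 hn.2]
    · apply Finset.sum_congr rfl
      intro n hn
      rw [Finset.mem_Icc] at hn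
      rw [hfun (n+1) (by omega) (by omega), hfun n (by omega) (by omega)]
  · rw [hfun 1 le_rfl hN]

lemma dgLin_congr {d N : ℕ} (hN : 1 ≤ N)
    (Kt : Matrix (Fin d ⊕ Fin d) (Fin d ⊕ Fin d) ℝ) (t : ℕ → ℝ)
    (f : ℝ → Fin d → ℝ) (z0 : (Fin d ⊕ Fin d) → ℝ)
    (V W : ℕ → ℝ → (Fin d ⊕ Fin d) → ℝ)
    (h : ∀ n, 1 ≤ n → n ≤ N → ∀ s, V n s = W n s) :
    dgLin Kt N t f z0 V = dgLin Kt N t f z0 W := by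
  unfold dgLin
  congr 1
  · apply Finset.sum_congr rfl
    intro n hn
    rw [Finset.mem_Icc] at hn
    apply intervalIntegral.integral_congr
    intro s _
    show _ ⬝ᵥ V n s = _ ⬝ᵥ W n s
    rw [h n hn.1 hn.2 s]
  · rw [h 1 le_rfl hN (t 0)]

lemma integrable_fdot {d : ℕ} {T : ℝ} {f : ℝ → Fin d → ℝ}
    (hf : MemLp f 2 (volume.restrict (Set.Ioc 0 T))) {a b : ℝ}
    (h0 : 0 ≤ a) (hab : a ≤ b) (hbT : b ≤ T) (p : (Fin d ⊕ Fin d) → ℝ[X]) :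
    IntervalIntegrable (fun s => Sum.elim (0 : Fin d → ℝ) (f s) ⬝ᵥ evv p s) volume a b := by
  have hsub : Set.Ioc a b ⊆ Set.Ioc 0 T := Set.Ioc_subset_Ioc h0 hbT
  have hf' : MemLp f 2 (volume.restrict (Set.Ioc a b)) :=
    hf.mono_measure (Measure.restrict_mono hsub le_rfl)
  haveI : IsFiniteMeasure (volume.restrict (Set.Ioc a b)) :=
    ⟨by rw [Measure.restrict_apply_univ]; exact measure_Ioc_lt_top⟩
  have hint : Integrable f (volume.restrict (Set.Ioc a b)) :=
    (hf'.mono_exponent one_le_two).integrable le_rfl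
  rw [intervalIntegrable_iff, Set.uIoc_of_le hab]
  have hrw : (fun s => Sum.elim (0 : Fin d → ℝ) (f s) ⬝ᵥ evv p s)
      = fun s => ∑ i : Fin d, f s i * (p (Sum.inr i)).eval s := by
    funext s
    rw [dotProduct, Fintype.sum_sum_type]
    simp [evv]
  rw [hrw]
  apply MeasureTheory.integrable_finset_sum
  intro i _
  have hcomp : Integrable (fun s => f s i) (volume.restrict (Set.Ioc a b)) :=
    (ContinuousLinearMap.proj i : (Fin d → ℝ) →L[ℝ] ℝ).integrable_comp hint
  obtain ⟨M0, hM0⟩ := (isCompact_Icc (a := a) (b := b)).exists_bound_of_continuousOn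
    (Polynomial.continuousOn (p (Sum.inr i)))
  have hbd : ∀ᵐ s ∂(volume.restrict (Set.Ioc a b)), ‖(p (Sum.inr i)).eval s‖ ≤ M0 :=
    (ae_restrict_iff' measurableSet_Ioc).2 (Filter.Eventually.of_forall
      (fun s hs => hM0 s (Set.Ioc_subset_Icc_self hs)))
  have := MeasureTheory.Integrable.bdd_mul (c := M0) hcomp
    (Polynomial.continuous (p (Sum.inr i))).aestronglyMeasurable hbd
  exact this.congr (Filter.Eventually.of_forall (fun s => by ring))

lemma t_mono {N : ℕ} {t : ℕ → ℝ} (hmono : ∀ n < N, t n < t (n+1)) :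
    ∀ m n, m ≤ n → n ≤ N → t m ≤ t n := by
  intro m n hmn hnN
  induction n with
  | zero => simp [Nat.le_zero.1 hmn]
  | succ k ih =>
      rcases Nat.lt_or_ge m (k+1) with h | h
      · exact le_trans (ih (by omega) (by omega)) (hmono k (by omega)).le
      · have hmk : m = k+1 := by omega
        rw [hmk]

lemma dgLin_tF_add {d N : ℕ} (hN : 1 ≤ N) {T : ℝ} (t : ℕ → ℝ) (ht0 : t 0 = 0) (htN : t N = T)
    (hmono : ∀ n < N, t n < t (n+1)) {f : ℝ → Fin d → ℝ}
    (hf : MemLp f 2 (volume.restrict (Set.Ioc 0 T)))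
    (Kt : Matrix (Fin d ⊕ Fin d) (Fin d ⊕ Fin d) ℝ) (z0 : (Fin d ⊕ Fin d) → ℝ)
    (R R' : ℕ → (Fin d ⊕ Fin d) → ℝ[X]) :
    dgLin Kt N t f z0 (tF (R + R')) = dgLin Kt N t f z0 (tF R) + dgLin Kt N t f z0 (tF R') := by
  have hbounds : ∀ n, 1 ≤ n → n ≤ N → 0 ≤ t (n-1) ∧ t (n-1) ≤ t n ∧ t n ≤ T := by
    intro n h1 h2
    refine ⟨?_, ?_, ?_⟩
    · rw [← ht0]; exact t_mono hmono 0 (n-1) (by omega) (by omega)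
    · exact t_mono hmono (n-1) n (by omega) h2
    · rw [← htN]; exact t_mono hmono n N h2 le_rfl
  unfold dgLin tF
  have hterm : ∀ n ∈ Finset.Icc 1 N,
      (∫ s in (t (n-1))..(t n), Sum.elim (0 : Fin d → ℝ) (f s) ⬝ᵥ evv ((R + R') n) s)
        = (∫ s in (t (n-1))..(t n), Sum.elim (0 : Fin d → ℝ) (f s) ⬝ᵥ evv (R n) s)
          + (∫ s in (t (n-1))..(t n), Sum.elim (0 : Fin d → ℝ) (f s) ⬝ᵥ evv (R' n) s) := by
    intro n hn
    rw [Finset.mem_Icc] at hn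
    obtain ⟨hb1, hb2, hb3⟩ := hbounds n hn.1 hn.2
    rw [← intervalIntegral.integral_add (integrable_fdot hf hb1 hb2 hb3 (R n))
        (integrable_fdot hf hb1 hb2 hb3 (R' n))]
    apply intervalIntegral.integral_congr
    intro s _
    simp only [show (R + R') n = R n + R' n from rfl, evv_add, dotProduct_add]
  rw [Finset.sum_congr rfl hterm, Finset.sum_add_distrib]
  have hfin : evv ((R + R') 1) (t 0) = evv (R 1) (t 0) + evv (R' 1) (t 0) := by
    rw [show (R+R') 1 = R 1 + R' 1 from rfl, evv_add]
  rw [hfin, dotProduct_add]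
  ring

lemma dgLin_tF_smul {d N : ℕ} (hN : 1 ≤ N) {T : ℝ} (t : ℕ → ℝ) (ht0 : t 0 = 0) (htN : t N = T)
    (hmono : ∀ n < N, t n < t (n+1)) {f : ℝ → Fin d → ℝ}
    (hf : MemLp f 2 (volume.restrict (Set.Ioc 0 T)))
    (Kt : Matrix (Fin d ⊕ Fin d) (Fin d ⊕ Fin d) ℝ) (z0 : (Fin d ⊕ Fin d) → ℝ)
    (c : ℝ) (R : ℕ → (Fin d ⊕ Fin d) → ℝ[X]) :
    dgLin Kt N t f z0 (tF (c • R)) = c * dgLin Kt N t f z0 (tF R) := by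
  unfold dgLin tF
  have hterm : ∀ n ∈ Finset.Icc 1 N,
      (∫ s in (t (n-1))..(t n), Sum.elim (0 : Fin d → ℝ) (f s) ⬝ᵥ evv ((c • R) n) s)
        = c * (∫ s in (t (n-1))..(t n), Sum.elim (0 : Fin d → ℝ) (f s) ⬝ᵥ evv (R n) s) := by
    intro n hn
    rw [← intervalIntegral.integral_const_mul]
    apply intervalIntegral.integral_congr
    intro s _
    simp only [show (c • R) n = c • R n from rfl, evv_smul, dotProduct_smul, smul_eq_mul]
  rw [Finset.sum_congr rfl hterm, ← Finset.mul_sum]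
  have hfin : evv ((c • R) 1) (t 0) = c • evv (R 1) (t 0) := by
    rw [show (c • R) 1 = c • R 1 from rfl, evv_smul]
  rw [hfin, dotProduct_smul, smul_eq_mul]
  ring

end
end DGAux
open DGAux


/-- well-posedness of the DG formulation.
With `P, L, K` symmetric positive definite, `K̃ = [[K,0],[0,P]]`, `A = [[0,−K],[K,L]]`,
a partition `0 = t₀ < ⋯ < t_N = T`, `f ∈ L²((0,T]; ℝ^d)` and `û₀, û₁ ∈ ℝ^d`, the
discrete problem "find `z_DG ∈ V_DG^r` with `A(z_DG, v) = F(v)` for all `v ∈ V_DG^r`"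
admits a unique solution (unique as a function on `(0,T] = ⋃ₙ Iₙ`). -/
theorem stmt_5 {d N : ℕ} (hd : 1 ≤ d) (hN : 1 ≤ N)
    (P L K : Matrix (Fin d) (Fin d) ℝ) (hP : P.PosDef) (hL : L.PosDef) (hK : K.PosDef)
    (T : ℝ) (hT : 0 < T) (t : ℕ → ℝ) (ht0 : t 0 = 0) (htN : t N = T)
    (hmono : ∀ n < N, t n < t (n+1)) (r : ℕ → ℕ)
    (f : ℝ → Fin d → ℝ) (hf : MemLp f 2 (volume.restrict (Set.Ioc 0 T)))
    (u0 u1 : Fin d → ℝ) :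
    ∃ Z : ℕ → ℝ → (Fin d ⊕ Fin d) → ℝ, MemDG N t r Z ∧
      (∀ V, MemDG N t r V →
        dgBilin (Matrix.fromBlocks K 0 0 P) (Matrix.fromBlocks 0 (-K) K L) N t Z V
          = dgLin (Matrix.fromBlocks K 0 0 P) N t f (Sum.elim u0 u1) V) ∧
      ∀ Z' : ℕ → ℝ → (Fin d ⊕ Fin d) → ℝ, MemDG N t r Z' →
        (∀ V, MemDG N t r V →
          dgBilin (Matrix.fromBlocks K 0 0 P) (Matrix.fromBlocks 0 (-K) K L) N t Z' V
            = dgLin (Matrix.fromBlocks K 0 0 P) N t f (Sum.elim u0 u1) V) →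
        ∀ n ∈ Finset.Icc 1 N, ∀ s ∈ Set.Ioc (t (n-1)) (t n), Z' n s = Z n s := by
  classical
  set Kt := Matrix.fromBlocks K 0 0 P with hKtdef
  set Am := Matrix.fromBlocks 0 (-K) K L with hAmdef
  set z0 := Sum.elim u0 u1 with hz0def
  set S := Sspace d N t r with hSdef
  -- the bilinear form as a linear map into the dual
  let Φ : S →ₗ[ℝ] Module.Dual ℝ S :=
    LinearMap.mk₂ ℝ (fun x y : S => bexp Kt Am N t x.1 y.1)
      (fun x y z => by
        show bexp Kt Am N t ((x + y : S) : ℕ → (Fin d ⊕ Fin d) → Polynomial ℝ) z.1 = _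
        rw [Submodule.coe_add]; exact bexp_add_left Kt Am N t x.1 y.1 z.1)
      (fun c x y => by
        show bexp Kt Am N t ((c • x : S) : ℕ → (Fin d ⊕ Fin d) → Polynomial ℝ) y.1 = _
        rw [Submodule.coe_smul]; rw [bexp_smul_left]; rfl)
      (fun x y z => by
        show bexp Kt Am N t x.1 ((y + z : S) : ℕ → (Fin d ⊕ Fin d) → Polynomial ℝ) = _
        rw [Submodule.coe_add]; exact bexp_add_right Kt Am N t x.1 y.1 z.1)
      (fun c x y => by
        show bexp Kt Am N t x.1 ((c • y : S) : ℕ → (Fin d ⊕ Fin d) → Polynomial ℝ) = _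
        rw [Submodule.coe_smul]; rw [bexp_smul_right]; rfl)
  -- the right-hand side as an element of the dual
  let F : Module.Dual ℝ S :=
    { toFun := fun y => dgLin Kt N t f z0 (tF y.1)
      map_add' := fun y y' => by
        show dgLin Kt N t f z0 (tF ((y + y' : S) : ℕ → (Fin d ⊕ Fin d) → Polynomial ℝ)) = _
        rw [Submodule.coe_add]
        exact dgLin_tF_add hN t ht0 htN hmono hf Kt z0 y.1 y'.1
      map_smul' := fun c y => by
        show dgLin Kt N t f z0 (tF ((c • y : S) : ℕ → (Fin d ⊕ Fin d) → Polynomial ℝ)) = _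
        rw [Submodule.coe_smul]
        rw [dgLin_tF_smul hN t ht0 htN hmono hf Kt z0 c y.1]
        rfl }
  -- injectivity via the energy estimate
  have hinj : Function.Injective Φ := by
    rw [← LinearMap.ker_eq_bot, LinearMap.ker_eq_bot']
    intro x hx0
    have hxx : bexp Kt Am N t x.1 x.1 = 0 := by
      have := LinearMap.congr_fun hx0 x
      exact this
    have hx1 : (x : ℕ → (Fin d ⊕ Fin d) → Polynomial ℝ) = 0 :=
      bexp_self_zero hK hP hL hN t hmono r x.1 x.2 hxx
    exact Subtype.ext hx1
  -- surjectivity in finite dimensions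
  have hsurj : Function.Surjective Φ :=
    (LinearMap.injective_iff_surjective_of_finrank_eq_finrank
      Subspace.dual_finrank_eq.symm).1 hinj
  obtain ⟨x, hx⟩ := hsurj F
  refine ⟨tF x.1, memDG_of_S hN t r x.1 x.2, ?_, ?_⟩
  · -- the solution property
    intro V hV
    obtain ⟨R, hRS, hrep⟩ := memDG_rep hN t hmono r V hV
    calc dgBilin Kt Am N t (tF x.1) V
        = dgBilin Kt Am N t (tF x.1) (tF R) := dgBilin_congr_right hN Kt Am t _ _ _ hrep
      _ = bexp Kt Am N t x.1 R := dgBilin_tF Kt Am N t x.1 R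
      _ = Φ x ⟨R, hRS⟩ := rfl
      _ = F ⟨R, hRS⟩ := by rw [hx]
      _ = dgLin Kt N t f z0 (tF R) := rfl
      _ = dgLin Kt N t f z0 V := (dgLin_congr hN Kt t f z0 _ _ hrep).symm
  · -- uniqueness
    intro Z' hZ' hsol n hn s _
    rw [Finset.mem_Icc] at hn
    obtain ⟨R', hR'S, hrep'⟩ := memDG_rep hN t hmono r Z' hZ'
    have hΦR' : Φ ⟨R', hR'S⟩ = F := by
      apply LinearMap.ext
      intro y
      show bexp Kt Am N t R' y.1 = dgLin Kt N t f z0 (tF y.1)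
      have hy := memDG_of_S hN t r y.1 y.2
      calc bexp Kt Am N t R' y.1
          = dgBilin Kt Am N t (tF R') (tF y.1) := (dgBilin_tF Kt Am N t R' y.1).symm
        _ = dgBilin Kt Am N t Z' (tF y.1) :=
            (dgBilin_congr_left hN Kt Am t Z' (tF R') (tF y.1) hrep').symm
        _ = dgLin Kt N t f z0 (tF y.1) := hsol (tF y.1) hy
    have hxR : (⟨R', hR'S⟩ : S) = x := hinj (by rw [hΦR', hx])
    have hR'x : R' = x.1 := congrArg Subtype.val hxR
    rw [hrep' n hn.1 hn.2 s, hR'x]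
end

section
/- Let r ∈ ℕ and let u ∈ L²(−1,1) be continuous at t = 1 (so that u(1) is well defined). Then there exists a unique polynomial p of degree ≤ r such that p(1) = u(1) and ∫_{−1}^{1} (u(t) − p(t)) q(t) dt = 0 for every polynomial q of degree ≤ r − 1. (This polynomial is denoted Π^r u.) -/
open MeasureTheory Set intervalIntegral


private lemma s8_int_poly (P : Polynomial ℝ) :
    IntegrableOn (fun t => P.eval t) (Set.Ioo (-1 : ℝ) 1) :=
  ((P.continuous.continuousOn.integrableOn_compact isCompact_Icc).mono_set
    Set.Ioo_subset_Icc_self)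

private lemma s8_int_mul (P Q : Polynomial ℝ) :
    IntegrableOn (fun t => P.eval t * Q.eval t) (Set.Ioo (-1 : ℝ) 1) := by
  simpa [Polynomial.eval_mul] using s8_int_poly (P * Q)

private lemma s8_finite : IsFiniteMeasure (volume.restrict (Set.Ioo (-1 : ℝ) 1)) := by
  refine ⟨?_⟩
  rw [Measure.restrict_apply_univ, Real.volume_Ioo]
  exact ENNReal.ofReal_lt_top

private lemma s8_int_u_mul {u : ℝ → ℝ}
    (hu : MemLp u 2 (volume.restrict (Set.Ioo (-1 : ℝ) 1))) (P : Polynomial ℝ) :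
    IntegrableOn (fun t => u t * P.eval t) (Set.Ioo (-1 : ℝ) 1) := by
  haveI := s8_finite
  have hu1 : Integrable u (volume.restrict (Set.Ioo (-1 : ℝ) 1)) :=
    memLp_one_iff_integrable.mp (hu.mono_exponent (by norm_num))
  obtain ⟨C, hC⟩ := isCompact_Icc.exists_bound_of_continuousOn
    (f := fun t : ℝ => P.eval t) P.continuous.continuousOn
  have hb : ∀ᵐ t ∂(volume.restrict (Set.Ioo (-1 : ℝ) 1)), ‖P.eval t‖ ≤ C :=
    (ae_restrict_iff' measurableSet_Ioo).2
      (Filter.Eventually.of_forall fun t ht => hC t (Set.Ioo_subset_Icc_self ht))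
  have := Integrable.bdd_mul (c := C) hu1 P.continuous.aestronglyMeasurable hb
  simpa [mul_comm, IntegrableOn] using this


private lemma s8_key (r : ℕ) (f : ℝ → ℝ)
    (hint : ∀ P : Polynomial ℝ, IntegrableOn (fun t => f t * P.eval t) (Set.Ioo (-1 : ℝ) 1))
    (h0 : ∀ i < r, ∫ t in Set.Ioo (-1 : ℝ) 1, f t * t ^ i = 0)
    (q : Polynomial ℝ) (hq : q.degree < (r : WithBot ℕ)) :
    ∫ t in Set.Ioo (-1 : ℝ) 1, f t * q.eval t = 0 := by
  rcases eq_or_ne q 0 with rfl | hq0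
  · simp
  have hnd : q.natDegree < r := (Polynomial.natDegree_lt_iff_degree_lt hq0).2 hq
  have hfun : ∀ t : ℝ, f t * q.eval t
      = ∑ i ∈ Finset.range r, q.coeff i * (f t * t ^ i) := by
    intro t
    rw [Polynomial.eval_eq_sum_range' hnd, Finset.mul_sum]
    exact Finset.sum_congr rfl fun i _ => by ring
  have hint' : ∀ i : ℕ, Integrable (fun t => f t * t ^ i)
      (volume.restrict (Set.Ioo (-1 : ℝ) 1)) := fun i => by
    have h := hint (Polynomial.X ^ i)
    simp only [Polynomial.eval_pow, Polynomial.eval_X] at h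
    exact h
  calc ∫ t in Set.Ioo (-1 : ℝ) 1, f t * q.eval t
      = ∫ t in Set.Ioo (-1 : ℝ) 1, ∑ i ∈ Finset.range r, q.coeff i * (f t * t ^ i) := by
        simp_rw [hfun]
    _ = ∑ i ∈ Finset.range r, ∫ t in Set.Ioo (-1 : ℝ) 1, q.coeff i * (f t * t ^ i) :=
        integral_finset_sum _ fun i _ => (hint' i).const_mul _
    _ = 0 := Finset.sum_eq_zero fun i hi => by
        rw [MeasureTheory.integral_const_mul, h0 i (Finset.mem_range.1 hi), mul_zero]

set_option maxHeartbeats 1000000 in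
private lemma s8_unique (r : ℕ) (p : Polynomial ℝ) (hdeg : p.natDegree ≤ r)
    (h1 : p.eval 1 = 0)
    (h0 : ∀ q : Polynomial ℝ, q.degree < (r : WithBot ℕ) →
      ∫ t in Set.Ioo (-1 : ℝ) 1, p.eval t * q.eval t = 0) :
    p = 0 := by
  obtain ⟨s, hs⟩ : (Polynomial.X - Polynomial.C (1 : ℝ)) ∣ p :=
    Polynomial.dvd_iff_isRoot.2 h1
  rcases eq_or_ne s 0 with rfl | hs0
  · simpa using hs
  exfalso
  have hX1 : (Polynomial.X - Polynomial.C (1 : ℝ)) ≠ 0 := Polynomial.X_sub_C_ne_zero 1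
  have hnd : p.natDegree = 1 + s.natDegree := by
    rw [hs, Polynomial.natDegree_mul hX1 hs0, Polynomial.natDegree_X_sub_C]
  have hslt : s.natDegree < r := by omega
  have h2 := h0 s ((Polynomial.natDegree_lt_iff_degree_lt hs0).1 hslt)
  obtain ⟨G, hG⟩ : ∃ G : Polynomial ℝ, G = (1 - Polynomial.X) * s ^ 2 := ⟨_, rfl⟩
  have hGeval : ∀ t : ℝ, G.eval t = (1 - t) * s.eval t ^ 2 := by
    intro t; rw [hG]; simp
  have hpe : ∀ t : ℝ, p.eval t * s.eval t = -(G.eval t) := by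
    intro t
    rw [hGeval, hs]
    simp only [Polynomial.eval_mul, Polynomial.eval_sub, Polynomial.eval_X,
      Polynomial.eval_C]
    ring
  have hGint : Integrable (fun t => G.eval t) (volume.restrict (Set.Ioo (-1 : ℝ) 1)) :=
    s8_int_poly G
  have hG0 : ∫ t in Set.Ioo (-1 : ℝ) 1, G.eval t = 0 := by
    have : ∫ t in Set.Ioo (-1 : ℝ) 1, p.eval t * s.eval t
        = -∫ t in Set.Ioo (-1 : ℝ) 1, G.eval t := by
      simp_rw [hpe]; exact integral_neg _
    rw [h2] at this
    linarith
  have hnonneg : ∀ᵐ t ∂(volume.restrict (Set.Ioo (-1 : ℝ) 1)), 0 ≤ G.eval t :=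
    (ae_restrict_iff' measurableSet_Ioo).2 (Filter.Eventually.of_forall fun t ht => by
      rw [hGeval]
      nlinarith [sq_nonneg (s.eval t), ht.2])
  have hae : ∀ᵐ t ∂(volume.restrict (Set.Ioo (-1 : ℝ) 1)), G.eval t = 0 :=
    (MeasureTheory.integral_eq_zero_iff_of_nonneg_ae hnonneg hGint).1 hG0
  -- G has infinitely many roots, hence G = 0, contradiction
  have hGne : G ≠ 0 := by
    rw [hG]
    refine mul_ne_zero ?_ (pow_ne_zero _ hs0)
    intro h
    have := congrArg (Polynomial.eval 0) h
    simp at this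
  have hGzero : G = 0 := by
    apply Polynomial.eq_zero_of_infinite_isRoot
    intro hfin
    have hZ0 : volume {x : ℝ | G.IsRoot x} = 0 := hfin.countable.measure_zero _
    have hmeas : MeasurableSet {t : ℝ | G.eval t ≠ 0} :=
      (isOpen_ne.preimage G.continuous).measurableSet
    have hne0 : volume ({t : ℝ | G.eval t ≠ 0} ∩ Set.Ioo (-1 : ℝ) 1) = 0 := by
      have h := ae_iff.1 hae
      rwa [Measure.restrict_apply hmeas] at h
    have hsub : Set.Ioo (-1 : ℝ) 1 ⊆
        ({t : ℝ | G.eval t ≠ 0} ∩ Set.Ioo (-1 : ℝ) 1) ∪ {x : ℝ | G.IsRoot x} := by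
      intro t ht
      by_cases h : G.eval t = 0
      · exact Or.inr h
      · exact Or.inl ⟨h, ht⟩
    have := (measure_mono (μ := volume) hsub).trans (measure_union_le _ _)
    rw [hne0, hZ0, Real.volume_Ioo] at this
    simp at this
    norm_num at this
  exact hGne hGzero

private lemma s8_mem (r : ℕ) (p : Polynomial ℝ) :
    p ∈ Polynomial.degreeLT ℝ (r + 1) ↔ p.natDegree ≤ r := by
  rw [Polynomial.mem_degreeLT]
  rcases eq_or_ne p 0 with rfl | h
  · simp only [Polynomial.natDegree_zero, Polynomial.degree_zero, Nat.zero_le, iff_true]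
    exact bot_lt_iff_ne_bot.mpr (by simp)
  · rw [← Polynomial.natDegree_lt_iff_degree_lt h, Nat.lt_succ_iff]

private lemma s8_int_mono (P : Polynomial ℝ) (i : ℕ) :
    Integrable (fun t => P.eval t * t ^ i) (volume.restrict (Set.Ioo (-1 : ℝ) 1)) := by
  have h := s8_int_mul P (Polynomial.X ^ i)
  simp only [Polynomial.eval_pow, Polynomial.eval_X] at h
  exact h

/-- integration against `t ^ i` as a linear map on polynomials -/
noncomputable def s8J (i : ℕ) : Polynomial ℝ →ₗ[ℝ] ℝ where
  toFun p := ∫ t in Set.Ioo (-1 : ℝ) 1, p.eval t * t ^ i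
  map_add' p q := by
    simp only [Polynomial.eval_add, add_mul]
    exact integral_add (s8_int_mono p i) (s8_int_mono q i)
  map_smul' c p := by
    simp only [Polynomial.eval_smul, smul_eq_mul, RingHom.id_apply, mul_assoc]
    rw [MeasureTheory.integral_const_mul]

private lemma s8J_apply (i : ℕ) (p : Polynomial ℝ) :
    s8J i p = ∫ t in Set.Ioo (-1 : ℝ) 1, p.eval t * t ^ i := rfl

/-- well-posedness of the projector `Π^r`.
Let `r ∈ ℕ` and let `u ∈ L²(−1,1)` be continuous at `t = 1` (from within `[−1,1]`).
Then there exists a unique polynomial `p` of degree `≤ r` such that `p 1 = u 1` and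
`∫_{−1}^{1} (u − p) q dt = 0` for every polynomial `q` of degree `≤ r − 1`
(equivalently, of degree `< r`). -/
theorem stmt_8 (r : ℕ) (u : ℝ → ℝ)
    (hu : MemLp u 2 (volume.restrict (Set.Ioo (-1 : ℝ) 1)))
    (hc : ContinuousWithinAt u (Set.Icc (-1 : ℝ) 1) 1) :
    ∃! p : Polynomial ℝ, p.natDegree ≤ r ∧ p.eval 1 = u 1 ∧
      ∀ q : Polynomial ℝ, q.degree < (r : WithBot ℕ) →
        ∫ t in (-1 : ℝ)..1, (u t - p.eval t) * q.eval t = 0 := by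
  haveI := s8_finite
  set V := Polynomial.degreeLT ℝ (r + 1) with hV
  let T : V →ₗ[ℝ] ℝ × (Fin r → ℝ) :=
    LinearMap.prod ((Polynomial.leval (1 : ℝ)).comp V.subtype)
      (LinearMap.pi fun i : Fin r => (s8J (i : ℕ)).comp V.subtype)
  have hT1 : ∀ p : V, (T p).1 = (p : Polynomial ℝ).eval 1 := fun p => rfl
  have hT2 : ∀ (p : V) (i : Fin r),
      (T p).2 i = ∫ t in Set.Ioo (-1 : ℝ) 1, (p : Polynomial ℝ).eval t * t ^ (i : ℕ) :=
    fun p i => rfl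
  haveI : FiniteDimensional ℝ V := Module.Finite.equiv (Polynomial.degreeLTEquiv ℝ (r + 1)).symm
  have hrank : Module.finrank ℝ V = Module.finrank ℝ (ℝ × (Fin r → ℝ)) := by
    rw [hV, (Polynomial.degreeLTEquiv ℝ (r + 1)).finrank_eq, Module.finrank_fin_fun,
      Module.finrank_prod, Module.finrank_self, Module.finrank_fin_fun]
    omega
  have hinj : Function.Injective T := by
    refine LinearMap.ker_eq_bot.mp (LinearMap.ker_eq_bot'.mpr fun p hp => ?_)
    have h1 : (p : Polynomial ℝ).eval 1 = 0 := by
      rw [← hT1 p, hp]; rfl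
    have h2 : ∀ i < r, ∫ t in Set.Ioo (-1 : ℝ) 1, (p : Polynomial ℝ).eval t * t ^ i = 0 := by
      intro i hi
      rw [← hT2 p ⟨i, hi⟩, hp]
      rfl
    have hz : (p : Polynomial ℝ) = 0 :=
      s8_unique r _ ((s8_mem r _).1 p.2) h1
        (fun q hq => s8_key r _ (fun P => s8_int_mul _ P) h2 q hq)
    exact Subtype.ext hz
  have hsurj : Function.Surjective T :=
    (LinearMap.linearEquivOfInjective T hinj hrank).surjective
  obtain ⟨p, hp⟩ := hsurj (u 1, fun i => ∫ t in Set.Ioo (-1 : ℝ) 1, u t * t ^ (i : ℕ))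
  have hpdeg : (p : Polynomial ℝ).natDegree ≤ r := (s8_mem r _).1 p.2
  have hpeval : (p : Polynomial ℝ).eval 1 = u 1 := by
    rw [← hT1 p, hp]
  have hpint : ∀ i < r, ∫ t in Set.Ioo (-1 : ℝ) 1,
      (p : Polynomial ℝ).eval t * t ^ i = ∫ t in Set.Ioo (-1 : ℝ) 1, u t * t ^ i := by
    intro i hi
    rw [← hT2 p ⟨i, hi⟩, hp]
  -- orthogonality against all q of degree < r, over Ioo
  have horth : ∀ q : Polynomial ℝ, q.degree < (r : WithBot ℕ) →
      ∫ t in Set.Ioo (-1 : ℝ) 1, (u t - (p : Polynomial ℝ).eval t) * q.eval t = 0 := by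
    intro q hq
    refine s8_key r _ (fun P => ?_) (fun i hi => ?_) q hq
    · have h := (s8_int_u_mul hu P).sub (s8_int_mul (p : Polynomial ℝ) P)
      exact h.congr (Filter.Eventually.of_forall fun t => by
        simp only [Pi.sub_apply]; ring)
    · have hi1 : Integrable (fun t => u t * t ^ i) (volume.restrict (Set.Ioo (-1 : ℝ) 1)) := by
        have h := s8_int_u_mul hu (Polynomial.X ^ i)
        simpa only [Polynomial.eval_pow, Polynomial.eval_X, IntegrableOn] using h
      have hi2 := s8_int_mono (p : Polynomial ℝ) i
      have : (fun t : ℝ => (u t - (p : Polynomial ℝ).eval t) * t ^ i)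
          = fun t => u t * t ^ i - (p : Polynomial ℝ).eval t * t ^ i := by
        funext t; ring
      rw [this, integral_sub hi1 hi2, hpint i hi, sub_self]
  have hconv : ∀ (f : ℝ → ℝ), ∫ t in (-1 : ℝ)..1, f t = ∫ t in Set.Ioo (-1 : ℝ) 1, f t := by
    intro f
    rw [intervalIntegral.integral_of_le (by norm_num : (-1 : ℝ) ≤ 1),
      MeasureTheory.integral_Ioc_eq_integral_Ioo]
  refine ⟨(p : Polynomial ℝ), ⟨hpdeg, hpeval, fun q hq => by rw [hconv]; exact horth q hq⟩, ?_⟩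
  rintro p' ⟨h1', h2', h3'⟩
  have hd : p' - (p : Polynomial ℝ) = 0 := by
    refine s8_unique r _ (le_trans (Polynomial.natDegree_sub_le _ _) (max_le h1' hpdeg)) ?_ ?_
    · rw [Polynomial.eval_sub, h2', hpeval, sub_self]
    · intro q hq
      have hB : ∫ t in Set.Ioo (-1 : ℝ) 1, (u t - p'.eval t) * q.eval t = 0 := by
        rw [← hconv]; exact h3' q hq
      have hA := horth q hq
      have hint1 : Integrable (fun t => (u t - p'.eval t) * q.eval t)
          (volume.restrict (Set.Ioo (-1 : ℝ) 1)) := by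
        have h := (s8_int_u_mul hu q).sub (s8_int_mul p' q)
        exact h.congr (Filter.Eventually.of_forall fun t => by
        simp only [Pi.sub_apply]; ring)
      have hint2 : Integrable (fun t => (u t - (p : Polynomial ℝ).eval t) * q.eval t)
          (volume.restrict (Set.Ioo (-1 : ℝ) 1)) := by
        have h := (s8_int_u_mul hu q).sub (s8_int_mul (p : Polynomial ℝ) q)
        exact h.congr (Filter.Eventually.of_forall fun t => by
        simp only [Pi.sub_apply]; ring)
      have : (fun t : ℝ => (p' - (p : Polynomial ℝ)).eval t * q.eval t)
          = fun t => (u t - (p : Polynomial ℝ).eval t) * q.eval t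
              - (u t - p'.eval t) * q.eval t := by
        funext t; simp only [Polynomial.eval_sub]; ring
      rw [this, integral_sub hint2 hint1, hA, hB, sub_self]
  exact sub_eq_zero.mp hd
end

section
/- There exists a constant C > 0 such that for every r ∈ ℕ and every continuously differentiable function u : [−1,1] → ℝ, the derivative of the projection satisfies ‖u′ − (Π^r u)′‖²_{L²(−1,1)} ≤ C (r+1) · inf { ‖u′ − q′‖²_{L²(−1,1)} : q a polynomial of degree ≤ r }. -/
open MeasureTheory Set intervalIntegral


open Polynomial

namespace Stmt11

/-- Legendre polynomials via Bonnet recurrence. -/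
noncomputable def L : ℕ → Polynomial ℝ
  | 0 => 1
  | 1 => X
  | (n+2) => (((2*(n:ℝ)+3))/((n:ℝ)+2)) • (X * L (n+1)) - ((((n:ℝ)+1))/((n:ℝ)+2)) • L n

lemma L_zero : L 0 = 1 := rfl
lemma L_one : L 1 = X := rfl

lemma castn2 (n : ℕ) : ((n : Polynomial ℝ) + 2) = C ((n:ℝ)+2) := by
  simp only [C_add, C_eq_natCast, map_ofNat]
lemma castn2' (n : ℕ) : (2*(n : Polynomial ℝ) + 3) = C (2*(n:ℝ)+3) := by
  simp only [C_add, C_mul, C_eq_natCast, map_ofNat]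
lemma castn1 (n : ℕ) : ((n : Polynomial ℝ) + 1) = C ((n:ℝ)+1) := by
  simp only [C_add, C_eq_natCast, map_one]

lemma L_rec (n : ℕ) :
    ((n : Polynomial ℝ) + 2) * L (n+2)
      = (2*(n : Polynomial ℝ) + 3) * (X * L (n+1)) - ((n : Polynomial ℝ) + 1) * L n := by
  have h2 : ((n:ℝ)+2) ≠ 0 := by positivity
  rw [castn2, castn2', castn1, ← smul_eq_C_mul, ← smul_eq_C_mul, ← smul_eq_C_mul]
  show ((n:ℝ)+2) • ((((2*(n:ℝ)+3))/((n:ℝ)+2)) • (X * L (n+1))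
      - ((((n:ℝ)+1))/((n:ℝ)+2)) • L n) = _
  rw [smul_sub, smul_smul, smul_smul,
    show ((n:ℝ)+2) * ((2*(n:ℝ)+3)/((n:ℝ)+2)) = 2*(n:ℝ)+3 by field_simp,
    show ((n:ℝ)+2) * (((n:ℝ)+1)/((n:ℝ)+2)) = (n:ℝ)+1 by field_simp]

lemma n2_ne (n : ℕ) : ((n : Polynomial ℝ) + 2) ≠ 0 := by
  rw [castn2]; exact C_ne_zero.mpr (by positivity)

/-- derivative of the recurrence -/
lemma dL_rec (n : ℕ) :
    ((n : Polynomial ℝ) + 2) * derivative (L (n+2))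
      = (2*(n : Polynomial ℝ) + 3) * (L (n+1) + X * derivative (L (n+1)))
        - ((n : Polynomial ℝ) + 1) * derivative (L n) := by
  have := congrArg derivative (L_rec n)
  simp only [derivative_mul, derivative_add, derivative_natCast, derivative_ofNat,
    derivative_X, derivative_sub, derivative_one, derivative_mul] at this
  rw [show ((2:Polynomial ℝ) * n + 3) = (2*(n:Polynomial ℝ)+3) from rfl] at this
  linear_combination this

/-- The three classical identities, proven jointly. -/
lemma L_identities (n : ℕ) :
    (derivative (L (n+1)) = X * derivative (L n) + ((n : Polynomial ℝ)+1) * L n)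
    ∧ (X * derivative (L (n+1)) = derivative (L n) + ((n : Polynomial ℝ)+1) * L (n+1))
    ∧ ((X^2 - 1) * derivative (L (n+1)) = ((n : Polynomial ℝ)+1) * (X * L (n+1) - L n)) := by
  induction n with
  | zero =>
    refine ⟨?_, ?_, ?_⟩ <;>
      simp [L_zero, L_one, derivative_one, derivative_X] <;> ring
  | succ n ih =>
    obtain ⟨h1, h2, h3⟩ := ih
    have hB := L_rec n
    have hdB := dL_rec n
    have hcast : ((n:Polynomial ℝ) + 1 + 1) = ((n:Polynomial ℝ) + 2) := by ring
    have hcast2 : (((n+1 : ℕ)):Polynomial ℝ) = (n:Polynomial ℝ) + 1 := by push_cast; ring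
    -- one (n+1)
    have g1 : derivative (L (n+2)) = X * derivative (L (n+1)) + ((n:Polynomial ℝ)+2) * L (n+1) := by
      apply mul_left_cancel₀ (n2_ne n)
      linear_combination hdB + ((n:Polynomial ℝ)+1) * h2
    -- two (n+1)
    have g2 : X * derivative (L (n+2)) = derivative (L (n+1)) + ((n:Polynomial ℝ)+2) * L (n+2) := by
      linear_combination X * g1 + h3 - hB
    -- three (n+1)
    have g3 : (X^2 - 1) * derivative (L (n+2)) = ((n:Polynomial ℝ)+2) * (X * L (n+2) - L (n+1)) := by
      linear_combination (X^2-1) * g1 + X * h3 - X * hB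
    exact ⟨by rw [hcast2, hcast]; exact g1, by rw [hcast2, hcast]; exact g2,
      by rw [hcast2, hcast]; exact g3⟩

end Stmt11

namespace Stmt11
open Polynomial

lemma L_one' (n : ℕ) : derivative (L (n+1)) = X * derivative (L n) + ((n : Polynomial ℝ)+1) * L n :=
  (L_identities n).1
lemma L_two (n : ℕ) : X * derivative (L (n+1)) = derivative (L n) + ((n : Polynomial ℝ)+1) * L (n+1) :=
  (L_identities n).2.1
lemma L_three (n : ℕ) : (X^2 - 1) * derivative (L (n+1)) = ((n : Polynomial ℝ)+1) * (X * L (n+1) - L n) :=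
  (L_identities n).2.2

/-- Sturm–Liouville form. -/
lemma L_SL (n : ℕ) :
    derivative ((X^2 - 1) * derivative (L n))
      = ((n : Polynomial ℝ) * ((n : Polynomial ℝ)+1)) * L n := by
  cases n with
  | zero => simp [L_zero]
  | succ n =>
    have h3 := congrArg derivative (L_three n)
    have h2 := L_two n
    have hc : (((n+1:ℕ)) : Polynomial ℝ) = (n : Polynomial ℝ) + 1 := by push_cast; ring
    rw [hc]
    simp only [derivative_mul, derivative_add, derivative_sub, derivative_natCast,
      derivative_one, derivative_X, derivative_pow, pow_one, C_eq_natCast,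
      Nat.cast_ofNat] at h3 ⊢
    linear_combination h3 + ((n:Polynomial ℝ)+1) * h2

lemma L_eval_neg_one (n : ℕ) : (L n).eval (-1) = (-1)^n := by
  induction n using Nat.twoStepInduction with
  | zero => simp [L_zero]
  | one => simp [L_one]
  | more n ih1 ih2 =>
    have := congrArg (eval (-1)) (L_rec n)
    simp only [eval_mul, eval_add, eval_sub, eval_natCast, eval_ofNat, eval_X, eval_one,
      eval_mul] at this
    have h2 : ((n:ℝ)+2) ≠ 0 := by positivity
    have : ((n:ℝ)+2) * (L (n+2)).eval (-1)
        = (2*(n:ℝ)+3) * (-1 * (-1)^(n+1)) - ((n:ℝ)+1) * (-1)^n := by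
      rw [← ih1, ← ih2]; convert this using 2 <;> push_cast <;> ring
    have : ((n:ℝ)+2) * (L (n+2)).eval (-1) = ((n:ℝ)+2) * (-1)^(n+2) := by
      rw [this]; ring
    exact mul_left_cancel₀ h2 this

lemma L_natDegree_le (n : ℕ) : (L n).natDegree ≤ n := by
  induction n using Nat.twoStepInduction with
  | zero => simp [L_zero]
  | one => simp [L_one]
  | more n ih1 ih2 =>
    show (L (n+2)).natDegree ≤ n+2
    rw [show L (n+2) = (((2*(n:ℝ)+3))/((n:ℝ)+2)) • (X * L (n+1))
      - ((((n:ℝ)+1))/((n:ℝ)+2)) • L n from rfl]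
    refine le_trans (natDegree_sub_le _ _) (max_le ?_ ?_)
    · refine le_trans (natDegree_smul_le _ _) (le_trans (natDegree_mul_le) ?_)
      have := ih2
      simp only [natDegree_X]
      omega
    · exact le_trans (natDegree_smul_le _ _) (le_trans ih1 (by omega))

lemma L_coeff_pos (n : ℕ) : 0 < (L n).coeff n := by
  induction n using Nat.twoStepInduction with
  | zero => simp [L_zero]
  | one => simp [L_one]
  | more n ih1 ih2 =>
    have hz : (L n).coeff (n+2) = 0 :=
      coeff_eq_zero_of_natDegree_lt (lt_of_le_of_lt (L_natDegree_le n) (by omega))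
    have : (L (n+2)).coeff (n+2) = (((2*(n:ℝ)+3))/((n:ℝ)+2)) * (L (n+1)).coeff (n+1) := by
      rw [show L (n+2) = (((2*(n:ℝ)+3))/((n:ℝ)+2)) • (X * L (n+1))
        - ((((n:ℝ)+1))/((n:ℝ)+2)) • L n from rfl]
      rw [coeff_sub, coeff_smul, coeff_smul, coeff_X_mul, hz]
      simp [smul_eq_mul]
    rw [this]
    have h1 : (0:ℝ) < (2*(n:ℝ)+3)/((n:ℝ)+2) := by positivity
    exact mul_pos h1 ih2

/-- Every polynomial of `natDegree ≤ m` is a combination of `L 0, ..., L m`. -/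
lemma L_span : ∀ (m : ℕ) (P : Polynomial ℝ), P.natDegree ≤ m →
    ∃ d : ℕ → ℝ, P = ∑ j ∈ Finset.range (m+1), C (d j) * L j := by
  intro m
  induction m with
  | zero =>
    intro P hP
    exact ⟨fun _ => P.coeff 0, by simpa [L_zero] using eq_C_of_natDegree_le_zero hP⟩
  | succ m ih =>
    intro P hP
    set c : ℝ := P.coeff (m+1) / (L (m+1)).coeff (m+1) with hc
    have hQdeg : (P - C c * L (m+1)).natDegree ≤ m := by
      rw [natDegree_le_iff_coeff_eq_zero]
      intro N hN
      rcases eq_or_lt_of_le (Nat.succ_le_of_lt hN) with h | h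
      · rw [coeff_sub, coeff_C_mul, ← h, hc,
          div_mul_cancel₀ _ (ne_of_gt (L_coeff_pos (m+1))), sub_self]
      · rw [coeff_sub, coeff_C_mul,
          coeff_eq_zero_of_natDegree_lt (lt_of_le_of_lt hP h),
          coeff_eq_zero_of_natDegree_lt (lt_of_le_of_lt (L_natDegree_le (m+1)) h)]
        ring
    obtain ⟨d, hd⟩ := ih _ hQdeg
    refine ⟨fun j => if j = m+1 then c else d j, ?_⟩
    rw [Finset.sum_range_succ]
    have : ∑ j ∈ Finset.range (m+1), C (if j = m+1 then c else d j) * L j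
        = ∑ j ∈ Finset.range (m+1), C (d j) * L j := by
      apply Finset.sum_congr rfl
      intro j hj
      rw [if_neg (by simp at hj; omega)]
    rw [this]
    simp only [reduceIte]
    rw [← hd]; ring

end Stmt11

namespace Stmt11
open Polynomial intervalIntegral

noncomputable def J (P : Polynomial ℝ) : ℝ := ∫ t in (-1:ℝ)..1, P.eval t

lemma J_deriv (P : Polynomial ℝ) : J (derivative P) = P.eval 1 - P.eval (-1) := by
  unfold J
  exact intervalIntegral.integral_eq_sub_of_hasDerivAt (f := fun x => P.eval x)
    (fun x _ => P.hasDerivAt x) ((P.derivative.continuous_aeval).intervalIntegrable _ _)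

lemma J_add (P Q : Polynomial ℝ) : J (P + Q) = J P + J Q := by
  unfold J
  simp only [eval_add]
  exact integral_add ((P.continuous_aeval).intervalIntegrable _ _)
    ((Q.continuous_aeval).intervalIntegrable _ _)

lemma J_Cmul (a : ℝ) (P : Polynomial ℝ) : J (C a * P) = a * J P := by
  unfold J
  simp only [eval_mul, eval_C]
  exact integral_const_mul a _

lemma J_sub (P Q : Polynomial ℝ) : J (P - Q) = J P - J Q := by
  have := J_add (P - Q) Q
  simp only [sub_add_cancel] at this
  linarith

lemma J_ibp (A B : Polynomial ℝ) :
    J (derivative A * B) = (A*B).eval 1 - (A*B).eval (-1) - J (A * derivative B) := by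
  have h := J_deriv (A*B)
  rw [derivative_mul, J_add] at h
  linarith

lemma J_key (n m : ℕ) : ((n:ℝ)*((n:ℝ)+1)) * J (L n * L m)
    = -(J ((X^2-1) * derivative (L n) * derivative (L m))) := by
  have h := J_ibp ((X^2-1) * derivative (L n)) (L m)
  rw [L_SL n] at h
  have hc : ((n : Polynomial ℝ) * ((n : Polynomial ℝ)+1)) * L n * L m
      = C ((n:ℝ)*((n:ℝ)+1)) * (L n * L m) := by
    rw [C_mul, castn1, C_eq_natCast]; ring
  rw [hc, J_Cmul] at h
  have hb1 : (((X^2-1) * derivative (L n) * L m)).eval 1 = 0 := by simp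
  have hb0 : (((X^2-1) * derivative (L n) * L m)).eval (-1) = 0 := by simp
  rw [hb1, hb0] at h
  rw [h]; ring

lemma J_ortho {n m : ℕ} (h : n ≠ m) : J (L n * L m) = 0 := by
  have h1 := J_key n m
  have h2 := J_key m n
  have hcomm : J (L m * L n) = J (L n * L m) := by rw [mul_comm]
  have hcomm2 : J ((X^2-1) * derivative (L m) * derivative (L n))
      = J ((X^2-1) * derivative (L n) * derivative (L m)) := by ring_nf
  rw [hcomm, hcomm2] at h2
  have key : (((n:ℝ)*((n:ℝ)+1)) - ((m:ℝ)*((m:ℝ)+1))) * J (L n * L m) = 0 := by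
    rw [sub_mul, h1, h2]; ring
  rcases mul_eq_zero.mp key with hf | hJ
  · exfalso
    rcases Nat.lt_or_ge n m with hlt | hge
    · have : (n:ℝ) < m := by exact_mod_cast hlt
      nlinarith [Nat.cast_nonneg (α := ℝ) n, Nat.cast_nonneg (α := ℝ) m]
    · have hlt' : m < n := by omega
      have : (m:ℝ) < n := by exact_mod_cast hlt'
      nlinarith [Nat.cast_nonneg (α := ℝ) n, Nat.cast_nonneg (α := ℝ) m]
  · exact hJ

lemma J_norm (n : ℕ) : J (L n * L n) = 2/(2*(n:ℝ)+1) := by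
  induction n using Nat.twoStepInduction with
  | zero =>
    unfold J
    simp [L_zero]
    norm_num
  | one =>
    have hd : (X * X : Polynomial ℝ) = derivative (C (3⁻¹ : ℝ) * X^3) := by
      rw [derivative_mul, derivative_C, derivative_X_pow]
      rw [zero_mul, zero_add, ← mul_assoc, ← C_mul]
      norm_num
      ring
    rw [L_one, hd, J_deriv]
    simp
    norm_num
  | more n ih1 ih2 =>
    have hpoly1 : C ((n:ℝ)+2) * (L (n+2) * L (n+2))
        = C (2*(n:ℝ)+3) * ((X * L (n+1)) * L (n+2)) - C ((n:ℝ)+1) * (L n * L (n+2)) := by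
      rw [← castn2, ← castn2', ← castn1]
      linear_combination (L (n+2)) * L_rec n
    have hpoly2 : C ((n:ℝ)+3) * (L (n+3) * L (n+1))
        = C (2*(n:ℝ)+5) * ((X * L (n+1)) * L (n+2)) - C ((n:ℝ)+2) * (L (n+1) * L (n+1)) := by
      have h := L_rec (n+1)
      push_cast at h
      have e1 : ((n : Polynomial ℝ)+1+2) = C ((n:ℝ)+3) := by
        simp only [C_add, C_eq_natCast, map_ofNat, map_one]; ring
      have e2 : (2*((n : Polynomial ℝ)+1)+3) = C (2*(n:ℝ)+5) := by
        simp only [C_add, C_mul, C_eq_natCast, map_ofNat, map_one]; ring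
      have e3 : ((n : Polynomial ℝ)+1+1) = C ((n:ℝ)+2) := by
        simp only [C_add, C_eq_natCast, map_ofNat, map_one]; ring
      rw [e1, e2, e3] at h
      linear_combination (L (n+1)) * h
    have j1 := congrArg J hpoly1
    have j2 := congrArg J hpoly2
    rw [J_sub, J_Cmul, J_Cmul, J_Cmul] at j1 j2
    rw [J_ortho (by omega : n ≠ n+2)] at j1
    rw [J_ortho (by omega : n+3 ≠ n+1)] at j2
    rw [ih2] at j2
    push_cast at ih2 ⊢
    have h2 : ((n:ℝ)+2) ≠ 0 := by positivity
    have h3 : (2*(n:ℝ)+3) ≠ 0 := by positivity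
    have h5 : (2*(n:ℝ)+5) ≠ 0 := by positivity
    have hx : J ((X * L (n+1)) * L (n+2)) = ((n:ℝ)+2) * (2/(2*(n:ℝ)+3)) / (2*(n:ℝ)+5) := by
      field_simp at j2 ⊢
      push_cast at j2
      linarith
    rw [hx] at j1
    have : J (L (n+2) * L (n+2)) = (2*(n:ℝ)+3) * (((n:ℝ)+2) * (2/(2*(n:ℝ)+3)) / (2*(n:ℝ)+5)) / ((n:ℝ)+2) := by
      field_simp at j1 ⊢
      apply mul_left_cancel₀ h2; linear_combination j1
    rw [this]
    field_simp
    ring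

end Stmt11

namespace Stmt11
open Polynomial intervalIntegral MeasureTheory Set

lemma cont_ii {f : ℝ → ℝ} (hf : ContinuousOn f (Set.Icc (-1:ℝ) 1)) :
    IntervalIntegrable f MeasureTheory.volume (-1:ℝ) 1 := by
  apply ContinuousOn.intervalIntegrable
  rwa [Set.uIcc_of_le (by norm_num : (-1:ℝ) ≤ 1)]

lemma sum_odd (r : ℕ) : ∑ j ∈ Finset.range r, (2*(j:ℝ)+1) = (r:ℝ)^2 := by
  induction r with
  | zero => simp
  | succ n ih => rw [Finset.sum_range_succ, ih]; push_cast; ring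

lemma J_sum {ι : Type*} (s : Finset ι) (f : ι → Polynomial ℝ) :
    J (∑ i ∈ s, f i) = ∑ i ∈ s, J (f i) := by
  unfold J
  simp only [eval_finset_sum]
  exact intervalIntegral.integral_finset_sum
    (fun i _ => ((f i).continuous_aeval).intervalIntegrable _ _)

/-- pull a finite Legendre sum out of an integral against `f`. -/
lemma intS (f : ℝ → ℝ) (hf : ContinuousOn f (Set.Icc (-1:ℝ) 1)) (m : ℕ) (lam : ℕ → ℝ) :
    (∫ t in (-1:ℝ)..1, f t * (∑ j ∈ Finset.range m, lam j * (L j).eval t))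
      = ∑ j ∈ Finset.range m, lam j * ∫ t in (-1:ℝ)..1, f t * (L j).eval t := by
  have hpt : ∀ t : ℝ, f t * (∑ j ∈ Finset.range m, lam j * (L j).eval t)
      = ∑ j ∈ Finset.range m, lam j * (f t * (L j).eval t) := by
    intro t
    rw [Finset.mul_sum]
    exact Finset.sum_congr rfl (fun j _ => by ring)
  rw [intervalIntegral.integral_congr (fun t _ => hpt t)]
  rw [intervalIntegral.integral_finset_sum (fun j _ => by
    apply cont_ii
    exact (continuous_const.continuousOn).mul (hf.mul ((L j).continuous_aeval).continuousOn))]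
  exact Finset.sum_congr rfl (fun j _ => intervalIntegral.integral_const_mul _ _)

lemma bessel (r : ℕ) (G : ℝ → ℝ) (hG : ContinuousOn G (Set.Icc (-1:ℝ) 1)) :
    ∑ j ∈ Finset.range (r+1),
        (2*(j:ℝ)+1)/2 * (∫ t in (-1:ℝ)..1, G t * (L j).eval t)^2
      ≤ ∫ t in (-1:ℝ)..1, (G t)^2 := by
  classical
  set β : ℕ → ℝ := fun j => ∫ t in (-1:ℝ)..1, G t * (L j).eval t with hβ
  set lam : ℕ → ℝ := fun j => (2*(j:ℝ)+1)/2 * β j with hlam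
  set S : ℝ → ℝ := fun t => ∑ j ∈ Finset.range (r+1), lam j * (L j).eval t with hS
  have hScont : Continuous S :=
    continuous_finset_sum _ (fun j _ => continuous_const.mul (L j).continuous_aeval)
  have h1 : ∫ t in (-1:ℝ)..1, G t * S t = ∑ j ∈ Finset.range (r+1), lam j * β j :=
    intS G hG (r+1) lam
  have hdiag : ∀ j k : ℕ, (∫ t in (-1:ℝ)..1, (L j).eval t * (L k).eval t) = J (L j * L k) := by
    intro j k; unfold J
    apply intervalIntegral.integral_congr
    intro t _
    simp only [eval_mul]
  have hSLj : ∀ j ∈ Finset.range (r+1),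
      (∫ t in (-1:ℝ)..1, S t * (L j).eval t) = lam j * (2/(2*(j:ℝ)+1)) := by
    intro j hj
    have hcomm : (∫ t in (-1:ℝ)..1, S t * (L j).eval t)
        = ∫ t in (-1:ℝ)..1, (L j).eval t * S t := by
      apply intervalIntegral.integral_congr; intro t _; exact mul_comm _ _
    rw [hcomm, intS (fun t => (L j).eval t) ((L j).continuous_aeval).continuousOn (r+1) lam,
      Finset.sum_eq_single j
        (fun k _ hk => by rw [hdiag j k, J_ortho (fun h => hk h.symm), mul_zero])
        (fun h => absurd hj h), hdiag j j, J_norm]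
  have h2 : ∫ t in (-1:ℝ)..1, S t * S t
      = ∑ j ∈ Finset.range (r+1), lam j * (lam j * (2/(2*(j:ℝ)+1))) := by
    rw [intS S hScont.continuousOn (r+1) lam]
    exact Finset.sum_congr rfl (fun j hj => by rw [hSLj j hj])
  have h0 : (0:ℝ) ≤ ∫ t in (-1:ℝ)..1, (G t - S t)^2 :=
    intervalIntegral.integral_nonneg (by norm_num) (fun x _ => sq_nonneg _)
  have i1 : IntervalIntegrable (fun t => (G t)^2) MeasureTheory.volume (-1:ℝ) 1 :=
    cont_ii (hG.pow 2)
  have i2 : IntervalIntegrable (fun t => 2 * (G t * S t)) MeasureTheory.volume (-1:ℝ) 1 :=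
    cont_ii ((continuous_const.continuousOn).mul (hG.mul hScont.continuousOn))
  have i3 : IntervalIntegrable (fun t => S t * S t) MeasureTheory.volume (-1:ℝ) 1 :=
    cont_ii (hScont.continuousOn.mul hScont.continuousOn)
  have hexp : ∫ t in (-1:ℝ)..1, (G t - S t)^2
      = (∫ t in (-1:ℝ)..1, (G t)^2) - 2 * (∫ t in (-1:ℝ)..1, G t * S t)
        + ∫ t in (-1:ℝ)..1, S t * S t := by
    have hpt : ∀ t : ℝ, (G t - S t)^2 = ((G t)^2 - 2 * (G t * S t)) + S t * S t := by
      intro t; ring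
    rw [intervalIntegral.integral_congr (fun t _ => hpt t),
      intervalIntegral.integral_add (i1.sub i2) i3, intervalIntegral.integral_sub i1 i2,
      intervalIntegral.integral_const_mul]
  have hterm : ∀ j ∈ Finset.range (r+1),
      lam j * β j = (2*(j:ℝ)+1)/2 * β j ^2 := by
    intro j _; rw [hlam]; ring
  have hterm2 : ∀ j ∈ Finset.range (r+1),
      lam j * (lam j * (2/(2*(j:ℝ)+1))) = (2*(j:ℝ)+1)/2 * β j ^2 := by
    intro j _
    have : (2*(j:ℝ)+1) ≠ 0 := by positivity
    rw [hlam]; field_simp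
  rw [h1, h2, Finset.sum_congr rfl hterm, Finset.sum_congr rfl hterm2] at hexp
  show ∑ j ∈ Finset.range (r+1), (2*(j:ℝ)+1)/2 * (β j)^2 ≤ ∫ t in (-1:ℝ)..1, (G t)^2
  linarith

/-- Integration by parts against polynomials, for `u − p`. -/
lemma ibp (u : ℝ → ℝ) (hu : ContDiffOn ℝ 1 u (Set.Icc (-1:ℝ) 1)) (p P : Polynomial ℝ) :
    (∫ t in (-1:ℝ)..1,
        (derivWithin u (Set.Icc (-1:ℝ) 1) t - (derivative p).eval t) * P.eval t)
      = (u 1 - p.eval 1) * P.eval 1 - (u (-1) - p.eval (-1)) * P.eval (-1)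
        - ∫ t in (-1:ℝ)..1, (u t - p.eval t) * (derivative P).eval t := by
  have huc := hu.continuousOn
  have hgc : ContinuousOn (derivWithin u (Set.Icc (-1:ℝ) 1)) (Set.Icc (-1:ℝ) 1) :=
    hu.continuousOn_derivWithin (uniqueDiffOn_Icc (by norm_num)) le_rfl
  have hud : ∀ x ∈ Set.Ioo (-1:ℝ) 1, HasDerivAt u (derivWithin u (Set.Icc (-1:ℝ) 1) x) x := by
    intro x hx
    have hx' : Set.Icc (-1:ℝ) 1 ∈ nhds x := Icc_mem_nhds hx.1 hx.2
    have hd : DifferentiableWithinAt ℝ u (Set.Icc (-1:ℝ) 1) x :=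
      (hu.differentiableOn one_ne_zero) x (Set.Ioo_subset_Icc_self hx)
    exact hd.hasDerivWithinAt.hasDerivAt hx'
  have hec : ContinuousOn (fun t => u t - p.eval t) (Set.Icc (-1:ℝ) 1) :=
    huc.sub (p.continuous_aeval).continuousOn
  have int1 : IntervalIntegrable
      (fun t => (derivWithin u (Set.Icc (-1:ℝ) 1) t - (derivative p).eval t) * P.eval t)
      MeasureTheory.volume (-1:ℝ) 1 :=
    cont_ii ((hgc.sub (p.derivative.continuous_aeval).continuousOn).mul
      (P.continuous_aeval).continuousOn)
  have int2 : IntervalIntegrable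
      (fun t => (u t - p.eval t) * (derivative P).eval t) MeasureTheory.volume (-1:ℝ) 1 :=
    cont_ii (hec.mul (P.derivative.continuous_aeval).continuousOn)
  have hkey : (∫ t in (-1:ℝ)..1,
      ((derivWithin u (Set.Icc (-1:ℝ) 1) t - (derivative p).eval t) * P.eval t
        + (u t - p.eval t) * (derivative P).eval t))
      = (u 1 - p.eval 1) * P.eval 1 - (u (-1) - p.eval (-1)) * P.eval (-1) := by
    apply intervalIntegral.integral_eq_sub_of_hasDeriv_right_of_le (by norm_num)
      (f := fun t => (u t - p.eval t) * P.eval t)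
    · exact hec.mul (P.continuous_aeval).continuousOn
    · intro x hx
      have h1 : HasDerivAt (fun t => u t - p.eval t)
          (derivWithin u (Set.Icc (-1:ℝ) 1) x - (derivative p).eval x) x :=
        (hud x hx).sub (p.hasDerivAt x)
      exact ((h1.mul (P.hasDerivAt x)).hasDerivWithinAt)
    · exact int1.add int2
  rw [intervalIntegral.integral_add int1 int2] at hkey
  linarith

end Stmt11


set_option maxHeartbeats 1600000
open Polynomial Stmt11

/-- Lemma 3.2: bound for the derivative of the projection.
There is a constant `C > 0` such that for every `r ∈ ℕ` and every continuously
differentiable `u : [−1,1] → ℝ`,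
`‖u′ − (Π^r u)′‖²_{L²(−1,1)} ≤ C (r+1) inf { ‖u′ − q′‖²_{L²(−1,1)} : deg q ≤ r }`;
equivalently (as formalized here), the bound holds with the infimum replaced by the
value at an arbitrary polynomial `q` of degree `≤ r`.  Here `Π^r u` is characterized as
the unique polynomial `p` of degree `≤ r` with `p 1 = u 1` and
`∫_{−1}^{1} (u − p) q̃ dt = 0` for all polynomials `q̃` of degree `< r`. -/
theorem stmt_11 :
    ∃ C > (0 : ℝ), ∀ r : ℕ, ∀ u : ℝ → ℝ,
      ContDiffOn ℝ 1 u (Set.Icc (-1 : ℝ) 1) →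
      ∀ p : Polynomial ℝ, p.natDegree ≤ r → p.eval 1 = u 1 →
        (∀ q : Polynomial ℝ, q.degree < (r : WithBot ℕ) →
          ∫ t in (-1 : ℝ)..1, (u t - p.eval t) * q.eval t = 0) →
        ∀ q : Polynomial ℝ, q.natDegree ≤ r →
          (∫ t in (-1 : ℝ)..1,
              (derivWithin u (Set.Icc (-1 : ℝ) 1) t - p.derivative.eval t) ^ 2)
            ≤ C * ((r : ℝ) + 1)
              * ∫ t in (-1 : ℝ)..1,
                  (derivWithin u (Set.Icc (-1 : ℝ) 1) t - q.derivative.eval t) ^ 2 := by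
  classical
  refine ⟨6, by norm_num, ?_⟩
  intro r u hu p hpdeg hp1 horth q hqdeg
  set dW : ℝ → ℝ := derivWithin u (Set.Icc (-1:ℝ) 1) with hdW
  have hgc : ContinuousOn dW (Set.Icc (-1:ℝ) 1) :=
    hu.continuousOn_derivWithin (uniqueDiffOn_Icc (by norm_num)) le_rfl
  have hGc : ContinuousOn (fun t => dW t - (derivative q).eval t) (Set.Icc (-1:ℝ) 1) :=
    hgc.sub (q.derivative.continuous).continuousOn
  have hDfc : ContinuousOn (fun t => dW t - (derivative p).eval t) (Set.Icc (-1:ℝ) 1) :=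
    hgc.sub (p.derivative.continuous).continuousOn
  set β : ℕ → ℝ := fun j => ∫ t in (-1:ℝ)..1, (dW t - (derivative q).eval t) * (L j).eval t
    with hβ
  set A : ℝ := ∫ t in (-1:ℝ)..1, (dW t - (derivative q).eval t)^2 with hA
  set δ : ℝ := u (-1) - p.eval (-1) with hδ
  have hA0 : 0 ≤ A :=
    intervalIntegral.integral_nonneg (by norm_num) (fun x _ => sq_nonneg _)
  -- the orthogonality hypothesis applies to derivatives of Legendre polynomials
  have hdegL : ∀ j : ℕ, j ≤ r → (derivative (L j)).degree < (r : WithBot ℕ) := by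
    intro j hj
    rcases eq_or_ne (derivative (L j)) 0 with h0 | h0
    · rw [h0, degree_zero]
      exact bot_lt_iff_ne_bot.mpr (by simp)
    · rw [degree_eq_natDegree h0]
      have h1 : (derivative (L j)).natDegree < r := by
        have h2 := Polynomial.natDegree_derivative_le (L j)
        have h3 := L_natDegree_le j
        rcases Nat.eq_zero_or_pos j with rfl | hjpos
        · exact absurd (by simp [L_zero] : derivative (L 0) = 0) h0
        · omega
      exact_mod_cast h1
  -- integration by parts values
  have hDL : ∀ j : ℕ, j ≤ r →
      (∫ t in (-1:ℝ)..1, (dW t - (derivative p).eval t) * (L j).eval t)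
        = -(δ * (-1)^j) := by
    intro j hj
    have h := Stmt11.ibp u hu p (L j)
    rw [← hdW] at h
    rw [horth (derivative (L j)) (hdegL j hj)] at h
    have h1 : u 1 - p.eval 1 = 0 := by rw [hp1]; ring
    rw [h1, L_eval_neg_one, ← hδ] at h
    rw [h]; ring
  -- split p-side integral into q-side plus polynomial part
  have hsplit : ∀ j : ℕ,
      (∫ t in (-1:ℝ)..1, (dW t - (derivative p).eval t) * (L j).eval t)
        = β j - J (derivative (p - q) * L j) := by
    intro j
    have hptw : ∀ t : ℝ, (dW t - (derivative p).eval t) * (L j).eval t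
        = (dW t - (derivative q).eval t) * (L j).eval t
          - (derivative (p - q)).eval t * (L j).eval t := by
      intro t; rw [derivative_sub, eval_sub]; ring
    rw [intervalIntegral.integral_congr (fun t _ => hptw t)]
    rw [intervalIntegral.integral_sub
      (f := fun t => (dW t - (derivative q).eval t) * (L j).eval t)
      (g := fun t => (derivative (p - q)).eval t * (L j).eval t)
      (cont_ii (hGc.mul ((L j).continuous).continuousOn))
      (cont_ii ((((p-q).derivative.continuous).continuousOn).mul
        ((L j).continuous).continuousOn))]
    congr 1
    unfold Stmt11.J
    apply intervalIntegral.integral_congr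
    intro t _
    simp only [eval_mul]
  have hJval : ∀ j : ℕ, j ≤ r → J (derivative (p - q) * L j) = β j + δ * (-1)^j := by
    intro j hj
    have h1 := hDL j hj
    rw [hsplit j] at h1
    linarith
  -- expansion of (p-q)' in Legendre basis
  obtain ⟨d, hwd⟩ : ∃ d : ℕ → ℝ,
      derivative (p - q) = ∑ j ∈ Finset.range r, C (d j) * L j := by
    cases r with
    | zero =>
      refine ⟨fun _ => 0, ?_⟩
      have hwdeg : (p - q).natDegree ≤ 0 :=
        le_trans (natDegree_sub_le p q) (max_le hpdeg hqdeg)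
      rw [Polynomial.eq_C_of_natDegree_le_zero hwdeg]
      simp
    | succ m =>
      apply L_span
      have hmax : (p-q).natDegree ≤ m+1 := le_trans (natDegree_sub_le p q) (max_le hpdeg hqdeg)
      have := Polynomial.natDegree_derivative_le (p - q)
      omega
  have hJr : J (derivative (p - q) * L r) = 0 := by
    rw [hwd, Finset.sum_mul, Stmt11.J_sum]
    apply Finset.sum_eq_zero
    intro k hk
    rw [mul_assoc, J_Cmul,
      J_ortho (by have := Finset.mem_range.mp hk; omega : k ≠ r), mul_zero]
  have hJlt : ∀ j : ℕ, j < r →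
      J (derivative (p - q) * L j) = d j * (2/(2*(j:ℝ)+1)) := by
    intro j hj
    rw [hwd, Finset.sum_mul, Stmt11.J_sum,
      Finset.sum_eq_single j
        (fun k _ hk => by rw [mul_assoc, J_Cmul, J_ortho hk, mul_zero])
        (fun h => absurd (Finset.mem_range.mpr hj) h),
      mul_assoc, J_Cmul, J_norm]
  -- δ² = β r ²
  have hδ2 : δ^2 = (β r)^2 := by
    have h1 := hJval r le_rfl
    rw [hJr] at h1
    have h2 : β r = -(δ * (-1)^r) := by linarith
    have h3 : ((-1:ℝ)^r)^2 = 1 := by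
      rcases Nat.even_or_odd r with he | ho
      · rw [he.neg_one_pow]; norm_num
      · rw [ho.neg_one_pow]; norm_num
    rw [h2]
    calc δ^2 = δ^2 * (((-1:ℝ)^r)^2) := by rw [h3]; ring
      _ = (-(δ * (-1)^r))^2 := by ring
  -- norm of (p-q)'
  have hterm : ∀ i k : ℕ,
      J ((C (d i) * L i) * (C (d k) * L k)) = d i * (d k * J (L i * L k)) := by
    intro i k
    rw [show (C (d i) * L i) * (C (d k) * L k) = C (d i) * (C (d k) * (L i * L k)) by ring,
      J_Cmul, J_Cmul]
  have hAw : (∫ t in (-1:ℝ)..1, ((derivative (p - q)).eval t)^2)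
      = ∑ j ∈ Finset.range r, (d j)^2 * (2/(2*(j:ℝ)+1)) := by
    have hLHS : (∫ t in (-1:ℝ)..1, ((derivative (p - q)).eval t)^2)
        = J (derivative (p-q) * derivative (p-q)) := by
      unfold Stmt11.J
      apply intervalIntegral.integral_congr
      intro t _
      simp only [eval_mul]; ring
    rw [hLHS]
    nth_rewrite 1 [hwd]
    nth_rewrite 1 [hwd]
    rw [Finset.sum_mul_sum, Stmt11.J_sum]
    refine Finset.sum_congr rfl (fun i hi => ?_)
    rw [Stmt11.J_sum,
      Finset.sum_eq_single i
        (fun k _ hki => by rw [hterm i k, J_ortho (fun h => hki h.symm), mul_zero, mul_zero])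
        (fun h => absurd hi h),
      hterm i i, J_norm]
    ring
  -- Bessel bounds
  have hbes : ∑ j ∈ Finset.range (r+1), (2*(j:ℝ)+1)/2 * (β j)^2 ≤ A :=
    Stmt11.bessel r (fun t => dW t - (derivative q).eval t) hGc
  have h2A : ∑ j ∈ Finset.range r, (2*(j:ℝ)+1) * (β j)^2 ≤ 2*A := by
    have hsub : ∑ j ∈ Finset.range r, (2*(j:ℝ)+1)/2 * (β j)^2
        ≤ ∑ j ∈ Finset.range (r+1), (2*(j:ℝ)+1)/2 * (β j)^2 :=
      Finset.sum_le_sum_of_subset_of_nonneg (Finset.range_subset_range.mpr (Nat.le_succ r))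
        (fun j _ _ => by positivity)
    have heq : ∑ j ∈ Finset.range r, (2*(j:ℝ)+1) * (β j)^2
        = 2 * ∑ j ∈ Finset.range r, (2*(j:ℝ)+1)/2 * (β j)^2 := by
      rw [Finset.mul_sum]
      exact Finset.sum_congr rfl (fun j _ => by ring)
    rw [heq]; linarith
  have hβr : (2*(r:ℝ)+1)/2 * (β r)^2 ≤ A := by
    refine le_trans ?_ hbes
    exact Finset.single_le_sum (f := fun j : ℕ => (2*(j:ℝ)+1)/2 * (β j)^2)
      (fun j _ => by positivity) (Finset.self_mem_range_succ r)
  -- sum-wise bound on Aw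
  have hAwle : (∫ t in (-1:ℝ)..1, ((derivative (p - q)).eval t)^2)
      ≤ 2*A + ((r:ℝ))^2 * δ^2 := by
    rw [hAw]
    have hb : ∀ j ∈ Finset.range r,
        (d j)^2 * (2/(2*(j:ℝ)+1)) ≤ (2*(j:ℝ)+1) * (β j)^2 + (2*(j:ℝ)+1) * δ^2 := by
      intro j hj
      have hj' := Finset.mem_range.mp hj
      have hval := hJval j (le_of_lt hj')
      rw [hJlt j hj'] at hval
      have hc : (0:ℝ) < 2*(j:ℝ)+1 := by positivity
      have h3 : ((-1:ℝ)^j)^2 = 1 := by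
        rcases Nat.even_or_odd j with he | ho
        · rw [he.neg_one_pow]; norm_num
        · rw [ho.neg_one_pow]; norm_num
      have hy : (δ*(-1)^j)^2 = δ^2 := by rw [mul_pow, h3, mul_one]
      have hd : d j = (2*(j:ℝ)+1)/2 * (β j + δ*(-1)^j) := by
        field_simp at hval ⊢
        linarith
      have hsq : (β j + δ*(-1)^j)^2 ≤ 2*(β j)^2 + 2*δ^2 := by
        nlinarith [sq_nonneg (β j - δ*(-1)^j), hy]
      calc (d j)^2 * (2/(2*(j:ℝ)+1))
          = (2*(j:ℝ)+1)/2 * (β j + δ*(-1)^j)^2 := by rw [hd]; field_simp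
        _ ≤ (2*(j:ℝ)+1)/2 * (2*(β j)^2 + 2*δ^2) :=
            mul_le_mul_of_nonneg_left hsq (by positivity)
        _ = (2*(j:ℝ)+1) * (β j)^2 + (2*(j:ℝ)+1) * δ^2 := by ring
    calc ∑ j ∈ Finset.range r, (d j)^2 * (2/(2*(j:ℝ)+1))
        ≤ ∑ j ∈ Finset.range r, ((2*(j:ℝ)+1) * (β j)^2 + (2*(j:ℝ)+1) * δ^2) :=
          Finset.sum_le_sum hb
      _ = (∑ j ∈ Finset.range r, (2*(j:ℝ)+1) * (β j)^2)
          + (∑ j ∈ Finset.range r, (2*(j:ℝ)+1)) * δ^2 := by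
          rw [Finset.sum_add_distrib, Finset.sum_mul]
      _ = (∑ j ∈ Finset.range r, (2*(j:ℝ)+1) * (β j)^2) + ((r:ℝ))^2 * δ^2 := by
          rw [sum_odd]
      _ ≤ 2*A + ((r:ℝ))^2 * δ^2 := by linarith
  have hr2 : ((r:ℝ))^2 * δ^2 ≤ (r:ℝ) * A := by
    rw [hδ2]
    nlinarith [hβr, hA0, sq_nonneg (β r), Nat.cast_nonneg (α := ℝ) r]
  -- final pointwise inequality and assembly
  have hfin : (∫ t in (-1:ℝ)..1, (dW t - (derivative p).eval t)^2)
      ≤ 2*A + 2*(∫ t in (-1:ℝ)..1, ((derivative (p - q)).eval t)^2) := by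
    have hptw : ∀ t ∈ Set.Icc (-1:ℝ) 1, (dW t - (derivative p).eval t)^2
        ≤ 2*(dW t - (derivative q).eval t)^2 + 2*((derivative (p - q)).eval t)^2 := by
      intro t _
      have key : (dW t - (derivative p).eval t)
          = (dW t - (derivative q).eval t) - (derivative (p-q)).eval t := by
        rw [derivative_sub, eval_sub]; ring
      rw [key]
      nlinarith [sq_nonneg ((dW t - (derivative q).eval t) + (derivative (p-q)).eval t)]
    have i1 : IntervalIntegrable (fun t => (dW t - (derivative p).eval t)^2)
        MeasureTheory.volume (-1:ℝ) 1 := cont_ii (hDfc.pow 2)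
    have iq : IntervalIntegrable (fun t => 2*(dW t - (derivative q).eval t)^2)
        MeasureTheory.volume (-1:ℝ) 1 :=
      cont_ii (continuous_const.continuousOn.mul (hGc.pow 2))
    have iw : IntervalIntegrable (fun t => 2*((derivative (p - q)).eval t)^2)
        MeasureTheory.volume (-1:ℝ) 1 :=
      cont_ii (continuous_const.continuousOn.mul
        ((((p-q).derivative.continuous).continuousOn).pow 2))
    have hmono := intervalIntegral.integral_mono_on (by norm_num) i1 (iq.add iw) hptw
    rw [intervalIntegral.integral_add iq iw, intervalIntegral.integral_const_mul,
      intervalIntegral.integral_const_mul] at hmono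
    exact hmono
  have hr0 : (0:ℝ) ≤ (r:ℝ) := Nat.cast_nonneg r
  calc (∫ t in (-1:ℝ)..1, (dW t - (derivative p).eval t)^2)
      ≤ 2*A + 2*(∫ t in (-1:ℝ)..1, ((derivative (p - q)).eval t)^2) := hfin
    _ ≤ 2*A + 2*(2*A + ((r:ℝ))^2 * δ^2) := by linarith
    _ ≤ 2*A + 2*(2*A + (r:ℝ)*A) := by linarith
    _ ≤ 6 * ((r:ℝ)+1) * A := by nlinarith
end
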